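/- arXiv:1510.02302 — 12 statements merged into one kernel-verified Lean document; each statement's English description precedes it below -/
import Mathlib

section
/- Let Ω = C([0,∞), ℝ^d) with the topology of uniform convergence on compact sets and its Borel σ-algebra, θ_τ the shift maps, f : ℝ^d → ℝ continuous with 0 < f(x) ≤ M for all x, and Φ : Ω → Ω the time-change map Φ(ω) = ω ∘ φ_ω. Let μ be a probability measure on Ω such that θ_τ is measure-preserving for μ for every τ ≥ 0, and assume q₀ := ∫_Ω 1/f(ω(0)) dμ(ω) < ∞. Then Φ is Borel measurable, and the measure P' defined as the pushforward under Φ of the measure with density ω ↦ q₀⁻¹/f(ω(0)) with respect to μ is a probability measure on Ω which is invariant under θ_τ for every τ ≥ 0 (i.e., the time-changed process Z = Φ(Y) is stationary under P'). -/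
open MeasureTheory Set Filter Topology
open scoped NNReal ENNReal

noncomputable section

/-- The path space `Ω = C([0,∞), ℝ^d)` with the compact-open topology (which coincides
with the topology of uniform convergence on compact sets since `[0,∞)` is locally
compact). -/
abbrev PathSpace (d : ℕ) := C(ℝ≥0, EuclideanSpace ℝ (Fin d))

/-- Borel σ-algebra on the path space. -/
instance (d : ℕ) : MeasurableSpace (PathSpace d) := borel _

instance (d : ℕ) : BorelSpace (PathSpace d) := ⟨rfl⟩

/-- The shift map `(θ_τ ω)(t) = ω(t + τ)`. -/
def pathShift (d : ℕ) (τ : ℝ≥0) (ω : PathSpace d) : PathSpace d :=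
  ω.comp ⟨fun t => t + τ, by exact continuous_id.add continuous_const⟩

/-- `ψ_ω(t) = ∫₀ᵗ 1/f(ω(s)) ds`. -/
def psi (d : ℕ) (f : EuclideanSpace ℝ (Fin d) → ℝ) (ω : PathSpace d) (t : ℝ) : ℝ :=
  ∫ s in (0:ℝ)..t, 1 / f (ω s.toNNReal)

namespace Stmt2Aux

variable {d : ℕ} {f : EuclideanSpace ℝ (Fin d) → ℝ} {M : ℝ}

lemma pathShift_apply (τ : ℝ≥0) (ω : PathSpace d) (t : ℝ≥0) :
    pathShift d τ ω t = ω (t + τ) := rfl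

lemma pathShift_zero (ω : PathSpace d) : pathShift d 0 ω = ω := by
  ext t; simp [pathShift_apply]

lemma pathShift_comp (a b : ℝ≥0) (ω : PathSpace d) :
    pathShift d a (pathShift d b ω) = pathShift d (a + b) ω := by
  ext t; simp [pathShift_apply, add_assoc]

section Psi

variable (hf : Continuous f) (hf_pos : ∀ x, 0 < f x)
include hf hf_pos

lemma cont_c (ω : PathSpace d) : Continuous fun s : ℝ => 1 / f (ω s.toNNReal) :=
  continuous_const.div
    (hf.comp (ω.continuous.comp continuous_real_toNNReal))
    (fun s => (hf_pos _).ne')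

lemma psi_sub (ω : PathSpace d) (a b : ℝ) :
    psi d f ω b - psi d f ω a = ∫ s in a..b, 1 / f (ω s.toNNReal) := by
  have h1 : psi d f ω a + ∫ s in a..b, 1 / f (ω s.toNNReal) = psi d f ω b :=
    intervalIntegral.integral_add_adjacent_intervals
      ((cont_c hf hf_pos ω).intervalIntegrable _ _)
      ((cont_c hf hf_pos ω).intervalIntegrable _ _)
  linarith

lemma psi_zero (ω : PathSpace d) : psi d f ω 0 = 0 :=
  intervalIntegral.integral_same

lemma psi_strictMono (ω : PathSpace d) : StrictMono (psi d f ω) := by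
  intro a b hab
  have h := psi_sub hf hf_pos ω a b
  have hpos : 0 < ∫ s in a..b, 1 / f (ω s.toNNReal) := by
    apply intervalIntegral.integral_pos hab ((cont_c hf hf_pos ω).continuousOn)
    · exact fun x _ => le_of_lt (one_div_pos.2 (hf_pos _))
    · exact ⟨a, ⟨le_refl a, hab.le⟩, one_div_pos.2 (hf_pos _)⟩
  linarith

lemma psi_nonneg (ω : PathSpace d) {t : ℝ} (ht : 0 ≤ t) : 0 ≤ psi d f ω t := by
  rcases eq_or_lt_of_le ht with h | h
  · rw [← h, psi_zero hf hf_pos]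
  · exact le_of_lt (by simpa [psi_zero hf hf_pos ω] using psi_strictMono hf hf_pos ω h)

lemma psi_hasDerivAt (ω : PathSpace d) (t : ℝ) :
    HasDerivAt (psi d f ω) (1 / f (ω t.toNNReal)) t :=
  ((cont_c hf hf_pos ω).integral_hasStrictDerivAt 0 t).hasDerivAt

variable (hM : 0 < M) (hf_le : ∀ x, f x ≤ M)
include hM hf_le

lemma psi_gap (ω : PathSpace d) {a b : ℝ} (hab : a ≤ b) :
    b - a ≤ M * (psi d f ω b - psi d f ω a) := by
  rw [psi_sub hf hf_pos]
  have h1 : ∫ s in a..b, (1/M : ℝ) ≤ ∫ s in a..b, 1 / f (ω s.toNNReal) := by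
    apply intervalIntegral.integral_mono_on hab (intervalIntegrable_const)
      ((cont_c hf hf_pos ω).intervalIntegrable _ _)
    intro x _
    exact one_div_le_one_div_of_le (hf_pos _) (hf_le _)
  rw [intervalIntegral.integral_const, smul_eq_mul] at h1
  calc b - a = M * ((b - a) * (1/M)) := by field_simp
  _ ≤ M * ∫ s in a..b, 1 / f (ω s.toNNReal) := by
      exact mul_le_mul_of_nonneg_left h1 hM.le

lemma abs_sub_le_psi (ω : PathSpace d) (a b : ℝ) :
    |a - b| ≤ M * |psi d f ω a - psi d f ω b| := by
  rcases le_total a b with h | h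
  · rw [abs_sub_comm, abs_of_nonneg (sub_nonneg.2 h),
      abs_sub_comm, abs_of_nonneg (sub_nonneg.2 ((psi_strictMono hf hf_pos ω).monotone h))]
    exact psi_gap hf hf_pos hM hf_le ω h
  · rw [abs_of_nonneg (sub_nonneg.2 h),
      abs_of_nonneg (sub_nonneg.2 ((psi_strictMono hf hf_pos ω).monotone h))]
    exact psi_gap hf hf_pos hM hf_le ω h

end Psi

section Cocycle

variable (hf : Continuous f) (hf_pos : ∀ x, 0 < f x)
include hf hf_pos

lemma psi_shift (ω : PathSpace d) (σ : ℝ≥0) {t : ℝ} (ht : 0 ≤ t) :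
    psi d f ω (t + σ) = psi d f (pathShift d σ ω) t + psi d f ω σ := by
  have h1 : psi d f ω (t + σ) - psi d f ω σ
      = ∫ s in (σ:ℝ)..(t + σ), 1 / f (ω s.toNNReal) := psi_sub hf hf_pos ω _ _
  have h2 : ∫ s in (σ:ℝ)..(t + σ), 1 / f (ω s.toNNReal)
      = ∫ s in (0:ℝ)..t, 1 / f (ω (s + (σ:ℝ)).toNNReal) := by
    rw [intervalIntegral.integral_comp_add_right (fun s => 1 / f (ω s.toNNReal)) (σ:ℝ)]
    norm_num
  have h3 : ∫ s in (0:ℝ)..t, 1 / f (ω (s + (σ:ℝ)).toNNReal)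
      = psi d f (pathShift d σ ω) t := by
    apply intervalIntegral.integral_congr
    intro x hx
    rw [uIcc_of_le ht] at hx
    have hx0 : (0:ℝ) ≤ x := hx.1
    show 1 / f (ω (x + (σ:ℝ)).toNNReal) = 1 / f ((pathShift d σ ω) x.toNNReal)
    rw [pathShift_apply]
    congr 2
    rw [Real.toNNReal_add hx0 σ.coe_nonneg, Real.toNNReal_coe]
  rw [h2, h3] at h1
  linarith

end Cocycle

section Topology

lemma theta_cont : Continuous fun p : ℝ≥0 × PathSpace d => pathShift d p.1 p.2 := by
  let addCM : C(ℝ≥0 × ℝ≥0, ℝ≥0) := ⟨fun q => q.2 + q.1, by fun_prop⟩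
  have h : ∀ p : ℝ≥0 × PathSpace d, p.2.comp (addCM.curry p.1) = pathShift d p.1 p.2 := by
    intro p; ext t; rfl
  apply Continuous.congr _ h
  exact ContinuousMap.continuous_comp'.comp
    ((addCM.curry.continuous.comp continuous_fst).prodMk continuous_snd)

variable (hf : Continuous f) (hf_pos : ∀ x, 0 < f x)
include hf hf_pos

lemma psi_cont2 : Continuous fun p : PathSpace d × ℝ => psi d f p.1 p.2 := by
  have hu : Continuous
      (Function.uncurry fun (p : PathSpace d × ℝ) (s : ℝ) => 1 / f (p.1 s.toNNReal)) := by
    apply Continuous.div continuous_const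
    · exact hf.comp (ContinuousEval.continuous_eval.comp
        ((continuous_fst.comp continuous_fst).prodMk
          (continuous_real_toNNReal.comp continuous_snd)))
    · exact fun q => (hf_pos _).ne'
  exact intervalIntegral.continuous_parametric_intervalIntegral_of_continuous hu continuous_snd

variable {φ : PathSpace d → ℝ≥0 → ℝ≥0} (hM : 0 < M) (hf_le : ∀ x, f x ≤ M)
  (hφ : ∀ ω (t : ℝ≥0), psi d f ω (φ ω t) = (t : ℝ))
include hM hf_le hφ

lemma phi_psi (ω : PathSpace d) (v : ℝ) :
    psi d f ω ((φ ω v.toNNReal : ℝ≥0) : ℝ) = max v 0 := by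
  rw [hφ]; exact Real.coe_toNNReal' v

lemma phi_le (ω : PathSpace d) (v : ℝ) :
    ((φ ω v.toNNReal : ℝ≥0) : ℝ) ≤ M * max v 0 := by
  have hb : (0:ℝ) ≤ ((φ ω v.toNNReal : ℝ≥0) : ℝ) := (φ ω v.toNNReal).coe_nonneg
  have h := psi_gap hf hf_pos hM hf_le ω hb
  rw [psi_zero hf hf_pos, phi_psi hf hf_pos hM hf_le hφ] at h
  linarith

lemma phir_cont :
    Continuous fun p : PathSpace d × ℝ => ((φ p.1 p.2.toNNReal : ℝ≥0) : ℝ) := by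
  rw [continuous_iff_continuousAt]
  rintro ⟨ω₀, v₀⟩
  rw [ContinuousAt, Metric.tendsto_nhds]
  intro ε hε
  set δ : ℝ := ε / (4 * M) with hδdef
  have hδ : 0 < δ := by positivity
  set K : ℝ := M * (|v₀| + 1) with hKdef
  let PsiCM : C(PathSpace d × ℝ, ℝ) := ⟨fun p => psi d f p.1 p.2, psi_cont2 hf hf_pos⟩
  have hpsiC : Tendsto (fun ω => PsiCM.curry ω) (𝓝 ω₀) (𝓝 (PsiCM.curry ω₀)) :=
    PsiCM.curry.continuous.continuousAt
  rw [ContinuousMap.tendsto_iff_forall_isCompact_tendstoUniformlyOn] at hpsiC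
  have hU := (Metric.tendstoUniformlyOn_iff.1 (hpsiC (Icc 0 K) isCompact_Icc)) δ hδ
  have hv : ∀ᶠ v in 𝓝 v₀, |v - v₀| < min 1 δ := by
    have hball : Metric.ball v₀ (min 1 δ) ∈ 𝓝 v₀ := Metric.ball_mem_nhds v₀ (lt_min one_pos hδ)
    filter_upwards [hball] with v hv
    simpa [Real.dist_eq] using hv
  rw [nhds_prod_eq]
  filter_upwards [Filter.Eventually.prod_mk hU hv] with p hp
  obtain ⟨h1, h2⟩ := hp
  set a : ℝ := ((φ p.1 p.2.toNNReal : ℝ≥0) : ℝ) with ha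
  set b : ℝ := ((φ ω₀ v₀.toNNReal : ℝ≥0) : ℝ) with hb
  have haK : a ∈ Icc (0:ℝ) K := by
    constructor
    · exact (φ p.1 p.2.toNNReal).coe_nonneg
    · refine le_trans (phi_le hf hf_pos hM hf_le hφ p.1 p.2) ?_
      have hm : max p.2 0 ≤ |v₀| + 1 := by
        have h4 : |p.2 - v₀| < 1 := lt_of_lt_of_le h2 (min_le_left _ _)
        rcases le_total p.2 0 with h|h
        · rw [max_eq_right h]; positivity
        · rw [max_eq_left h]
          have : p.2 ≤ |v₀| + |p.2 - v₀| := by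
            have := abs_sub_abs_le_abs_sub p.2 v₀
            have h5 := le_abs_self p.2
            linarith
          linarith
      exact mul_le_mul_of_nonneg_left hm hM.le
  have key : |a - b| ≤ M * |psi d f ω₀ a - psi d f ω₀ b| :=
    abs_sub_le_psi hf hf_pos hM hf_le ω₀ a b
  have e1 : psi d f ω₀ b = max v₀ 0 := phi_psi hf hf_pos hM hf_le hφ ω₀ v₀
  have e2 : psi d f p.1 a = max p.2 0 := phi_psi hf hf_pos hM hf_le hφ p.1 p.2
  have hclose : |psi d f ω₀ a - psi d f p.1 a| < δ := by
    have h6 := h1 a haK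
    simpa [Real.dist_eq, ContinuousMap.curry_apply, PsiCM] using h6
  have hmax : |max p.2 0 - max v₀ 0| ≤ |p.2 - v₀| := abs_max_sub_max_le_abs _ _ _
  have hper : |psi d f ω₀ a - psi d f ω₀ b| < 2 * δ := by
    have h5 : |p.2 - v₀| < δ := lt_of_lt_of_le h2 (min_le_right _ _)
    calc |psi d f ω₀ a - psi d f ω₀ b|
        ≤ |psi d f ω₀ a - psi d f p.1 a| + |psi d f p.1 a - psi d f ω₀ b| := abs_sub_le _ _ _
      _ = |psi d f ω₀ a - psi d f p.1 a| + |max p.2 0 - max v₀ 0| := by rw [e1, e2]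
      _ < δ + δ := by have := lt_of_le_of_lt hmax h5; linarith
      _ = 2 * δ := by ring
  rw [Real.dist_eq]
  calc |a - b| ≤ M * |psi d f ω₀ a - psi d f ω₀ b| := key
  _ ≤ M * (2*δ) := by nlinarith [abs_nonneg (psi d f ω₀ a - psi d f ω₀ b)]
  _ = ε / 2 := by rw [hδdef]; field_simp; ring
  _ < ε := by linarith

end Topology
section Derived

variable (hf : Continuous f) (hf_pos : ∀ x, 0 < f x)
  {φ : PathSpace d → ℝ≥0 → ℝ≥0} (hM : 0 < M) (hf_le : ∀ x, f x ≤ M)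
  (hφ : ∀ ω (t : ℝ≥0), psi d f ω (φ ω t) = (t : ℝ))

include hf hf_pos

lemma psi_inj (ω : PathSpace d) : Function.Injective (psi d f ω) :=
  (psi_strictMono hf hf_pos ω).injective

include hM hf_le hφ

lemma Sr_cont :
    Continuous fun p : PathSpace d × ℝ => pathShift d (φ p.1 p.2.toNNReal) p.1 := by
  apply Continuous.congr (f := fun p : PathSpace d × ℝ =>
    pathShift d (Real.toNNReal ((φ p.1 p.2.toNNReal : ℝ≥0) : ℝ)) p.1)
  · exact theta_cont.comp
      ((continuous_real_toNNReal.comp (phir_cont hf hf_pos hM hf_le hφ)).prodMk continuous_fst)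
  · intro p; rw [Real.toNNReal_coe]

lemma phi_cont : Continuous fun p : PathSpace d × ℝ≥0 => φ p.1 p.2 := by
  apply Continuous.congr (f := fun p : PathSpace d × ℝ≥0 =>
    Real.toNNReal ((φ p.1 ((p.2 : ℝ)).toNNReal : ℝ≥0) : ℝ))
  · exact continuous_real_toNNReal.comp
      ((phir_cont hf hf_pos hM hf_le hφ).comp
        (continuous_fst.prodMk (NNReal.continuous_coe.comp continuous_snd)))
  · intro p; rw [Real.toNNReal_coe, Real.toNNReal_coe]

lemma S_cont (τ : ℝ≥0) : Continuous fun ω : PathSpace d => pathShift d (φ ω τ) ω := by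
  apply Continuous.congr (f := fun ω : PathSpace d =>
    pathShift d (φ ω ((τ : ℝ)).toNNReal) ω)
  · exact (Sr_cont hf hf_pos hM hf_le hφ).comp (continuous_id.prodMk continuous_const)
  · intro ω; rw [Real.toNNReal_coe]

lemma phi_add (ω : PathSpace d) {s v : ℝ} (hs : 0 ≤ s) (hv : 0 ≤ v) :
    φ (pathShift d s.toNNReal ω) v.toNNReal + s.toNNReal
      = φ ω (psi d f ω s + v).toNNReal := by
  apply NNReal.coe_injective
  apply psi_inj hf hf_pos ω
  push_cast
  rw [Real.coe_toNNReal s hs]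
  have hx : (0:ℝ) ≤ ((φ (pathShift d s.toNNReal ω) v.toNNReal : ℝ≥0) : ℝ) :=
    (φ (pathShift d s.toNNReal ω) v.toNNReal).coe_nonneg
  have hcoc := psi_shift hf hf_pos ω s.toNNReal hx
  rw [Real.coe_toNNReal s hs] at hcoc
  rw [hcoc, phi_psi hf hf_pos hM hf_le hφ, phi_psi hf hf_pos hM hf_le hφ,
    max_eq_left hv, max_eq_left (add_nonneg (psi_nonneg hf hf_pos ω hs) hv)]
  ring

lemma S_comp_theta (ω : PathSpace d) {s v : ℝ} (hs : 0 ≤ s) (hv : 0 ≤ v) :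
    pathShift d (φ (pathShift d s.toNNReal ω) v.toNNReal) (pathShift d s.toNNReal ω)
      = pathShift d (φ ω (psi d f ω s + v).toNNReal) ω := by
  rw [pathShift_comp, phi_add hf hf_pos hM hf_le hφ ω hs hv]

lemma Phi_S (Φ : PathSpace d → PathSpace d)
    (hΦ : ∀ ω (t : ℝ≥0), Φ ω t = ω (φ ω t)) (τ : ℝ≥0) (ω : PathSpace d) :
    Φ (pathShift d (φ ω τ) ω) = pathShift d τ (Φ ω) := by
  have key : ∀ t : ℝ≥0, φ (pathShift d (φ ω τ) ω) t + φ ω τ = φ ω (t + τ) := by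
    intro t
    apply NNReal.coe_injective
    apply psi_inj hf hf_pos ω
    push_cast
    have hx : (0:ℝ) ≤ ((φ (pathShift d (φ ω τ) ω) t : ℝ≥0) : ℝ) :=
      (φ (pathShift d (φ ω τ) ω) t).coe_nonneg
    have hcoc := psi_shift hf hf_pos ω (φ ω τ) hx
    rw [hcoc, hφ, hφ, hφ]
    push_cast
    ring
  ext t
  rw [pathShift_apply, hΦ, hΦ, pathShift_apply, key t]

end Derived
section MeasureCore

lemma lintegral_image_eq_lintegral_abs_deriv_mul' {s : Set ℝ} {g : ℝ → ℝ} {g' : ℝ → ℝ}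
    (hs : MeasurableSet s) (hg' : ∀ x ∈ s, HasDerivWithinAt g (g' x) s x)
    (hg : Set.InjOn g s) (h : ℝ → ℝ≥0∞) :
    ∫⁻ x in g '' s, h x = ∫⁻ x in s, ENNReal.ofReal |g' x| * h (g x) := by
  simpa only [ContinuousLinearMap.det_toSpanSingleton] using
    MeasureTheory.lintegral_image_eq_lintegral_abs_det_fderiv_mul volume hs
      (fun x hx => (hg' x hx).hasFDerivWithinAt) hg h

variable (hf : Continuous f) (hf_pos : ∀ x, 0 < f x)
include hf hf_pos

lemma psi_continuous (ω : PathSpace d) : Continuous (psi d f ω) := by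
  rw [continuous_iff_continuousAt]
  exact fun t => (psi_hasDerivAt hf hf_pos ω t).continuousAt

lemma psi_image_Icc (ω : PathSpace d) {T : ℝ} (hT : 0 ≤ T) :
    psi d f ω '' Icc 0 T = Icc 0 (psi d f ω T) := by
  apply Subset.antisymm
  · rintro x ⟨y, hy, rfl⟩
    refine ⟨?_, (psi_strictMono hf hf_pos ω).monotone hy.2⟩
    rw [← psi_zero hf hf_pos ω]
    exact (psi_strictMono hf hf_pos ω).monotone hy.1
  · have h := intermediate_value_Icc hT ((psi_continuous hf hf_pos ω).continuousOn)
    rwa [psi_zero hf hf_pos ω] at h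

end MeasureCore
section Invariance

variable (hf : Continuous f) (hf_pos : ∀ x, 0 < f x)
  {φ : PathSpace d → ℝ≥0 → ℝ≥0} (hM : 0 < M) (hf_le : ∀ x, f x ≤ M)
  (hφ : ∀ ω (t : ℝ≥0), psi d f ω (φ ω t) = (t : ℝ))
include hf hf_pos hM hf_le hφ

lemma time_avg (μ : Measure (PathSpace d)) [IsProbabilityMeasure μ]
    (hshift : ∀ τ : ℝ≥0, MeasurePreserving (pathShift d τ) μ μ)
    (B : Set (PathSpace d)) (hB : MeasurableSet B) {v T : ℝ} (hv : 0 ≤ v) (hT : 0 ≤ T) :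
    ENNReal.ofReal T * (∫⁻ ω, B.indicator (fun _ => (1:ℝ≥0∞))
        (pathShift d (φ ω v.toNNReal) ω) * ENNReal.ofReal (1 / f (ω (0:ℝ≥0))) ∂μ)
      = ∫⁻ ω, (∫⁻ x in Icc v (psi d f ω T + v),
          B.indicator (fun _ => (1:ℝ≥0∞)) (pathShift d (φ ω x.toNNReal) ω)) ∂μ := by
  set w : PathSpace d → ℝ≥0∞ := fun ω => ENNReal.ofReal (1 / f (ω (0:ℝ≥0))) with hw_def
  have hw : Measurable w := by
    apply ENNReal.measurable_ofReal.comp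
    exact (continuous_const.div (hf.comp (continuous_eval_const (0:ℝ≥0)))
      (fun ω => (hf_pos _).ne')).measurable
  set gB : PathSpace d → ℝ≥0∞ := B.indicator (fun _ => 1) with hgB_def
  have hgB : Measurable gB := measurable_one.indicator hB
  have hSrv : ∀ u : ℝ, Measurable fun ω : PathSpace d => pathShift d (φ ω u.toNNReal) ω :=
    fun u => ((Sr_cont hf hf_pos hM hf_le hφ).comp
      (continuous_id.prodMk continuous_const)).measurable
  have hΘc : Continuous fun p : ℝ × PathSpace d => pathShift d p.1.toNNReal p.2 :=
    theta_cont.comp ((continuous_real_toNNReal.comp continuous_fst).prodMk continuous_snd)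
  set A : ℝ≥0∞ := ∫⁻ ω, gB (pathShift d (φ ω v.toNNReal) ω) * w ω ∂μ with hA_def
  have hAmeas : Measurable fun ω => gB (pathShift d (φ ω v.toNNReal) ω) * w ω :=
    (hgB.comp (hSrv v)).mul hw
  -- Step 1: constant integral
  have step1 : ENNReal.ofReal T * A = ∫⁻ _ in Icc (0:ℝ) T, A ∂volume := by
    rw [setLIntegral_const, Real.volume_Icc, sub_zero, mul_comm]
  -- Step 2: shift invariance
  have step2 : ∀ s : ℝ, A = ∫⁻ ω, gB (pathShift d (φ (pathShift d s.toNNReal ω) v.toNNReal)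
      (pathShift d s.toNNReal ω)) * w (pathShift d s.toNNReal ω) ∂μ :=
    fun s => ((hshift s.toNNReal).lintegral_comp hAmeas).symm
  -- Step 3: Fubini
  set F : ℝ → PathSpace d → ℝ≥0∞ := fun s ω =>
    gB (pathShift d (φ (pathShift d s.toNNReal ω) v.toNNReal) (pathShift d s.toNNReal ω))
      * w (pathShift d s.toNNReal ω) with hF_def
  have hFmeas : Measurable (Function.uncurry F) := by
    apply Measurable.mul
    · apply hgB.comp
      exact ((Sr_cont hf hf_pos hM hf_le hφ).comp (hΘc.prodMk continuous_const)).measurable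
    · exact hw.comp hΘc.measurable
  have step3 : ∫⁻ s in Icc (0:ℝ) T, (∫⁻ ω, F s ω ∂μ) ∂volume
      = ∫⁻ ω, (∫⁻ s in Icc (0:ℝ) T, F s ω ∂volume) ∂μ :=
    lintegral_lintegral_swap hFmeas.aemeasurable
  -- Step 4: pathwise change of variables
  have step4 : ∀ ω : PathSpace d, ∫⁻ s in Icc (0:ℝ) T, F s ω ∂volume
      = ∫⁻ x in Icc v (psi d f ω T + v), gB (pathShift d (φ ω x.toNNReal) ω) ∂volume := by
    intro ω
    set G : ℝ → ℝ≥0∞ := fun x => gB (pathShift d (φ ω x.toNNReal) ω) with hG_def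
    have h4a : ∫⁻ s in Icc (0:ℝ) T, F s ω ∂volume
        = ∫⁻ s in Icc (0:ℝ) T,
            ENNReal.ofReal |1 / f (ω s.toNNReal)| * G (psi d f ω s + v) ∂volume := by
      apply setLIntegral_congr_fun measurableSet_Icc
      intro s hs
      have hw_eq : w (pathShift d s.toNNReal ω) = ENNReal.ofReal (1 / f (ω s.toNNReal)) := by
        rw [hw_def]
        simp [pathShift_apply]
      have hid := S_comp_theta hf hf_pos hM hf_le hφ ω hs.1 hv
      rw [hF_def]
      simp only []
      rw [hid, hw_eq, abs_of_pos (one_div_pos.2 (hf_pos _)), mul_comm]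
    have h4b : ∫⁻ x in psi d f ω '' Icc (0:ℝ) T, G (x + v) ∂volume
        = ∫⁻ s in Icc (0:ℝ) T,
            ENNReal.ofReal |1 / f (ω s.toNNReal)| * G (psi d f ω s + v) ∂volume :=
      lintegral_image_eq_lintegral_abs_deriv_mul' measurableSet_Icc
        (fun x _ => (psi_hasDerivAt hf hf_pos ω x).hasDerivWithinAt)
        ((psi_inj hf hf_pos ω).injOn) _
    have h4c : ∫⁻ x in Icc (0:ℝ) (psi d f ω T), G (x + v) ∂volume
        = ∫⁻ y in Icc v (psi d f ω T + v), G y ∂volume := by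
      have hmp := (measurePreserving_add_right volume v).setLIntegral_comp_emb
        (MeasurableEquiv.addRight v).measurableEmbedding G (Icc (0:ℝ) (psi d f ω T))
      rw [hmp]
      congr 1
      rw [show (fun x : ℝ => x + v) '' Icc (0:ℝ) (psi d f ω T)
        = Icc (0 + v) (psi d f ω T + v) from Set.image_add_const_Icc _ _ _, zero_add]
    rw [h4a, ← h4b, psi_image_Icc hf hf_pos ω hT, h4c]
  calc ENNReal.ofReal T * A = ∫⁻ _ in Icc (0:ℝ) T, A ∂volume := step1
  _ = ∫⁻ s in Icc (0:ℝ) T, (∫⁻ ω, F s ω ∂μ) ∂volume := by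
      apply setLIntegral_congr_fun measurableSet_Icc
      exact fun s _ => step2 s
  _ = ∫⁻ ω, (∫⁻ s in Icc (0:ℝ) T, F s ω ∂volume) ∂μ := step3
  _ = ∫⁻ ω, (∫⁻ x in Icc v (psi d f ω T + v),
        B.indicator (fun _ => (1:ℝ≥0∞)) (pathShift d (φ ω x.toNNReal) ω)) ∂μ := by
      apply lintegral_congr
      intro ω
      exact step4 ω

end Invariance
section MapS

variable (hf : Continuous f) (hf_pos : ∀ x, 0 < f x)
  {φ : PathSpace d → ℝ≥0 → ℝ≥0} (hM : 0 < M) (hf_le : ∀ x, f x ≤ M)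
  (hφ : ∀ ω (t : ℝ≥0), psi d f ω (φ ω t) = (t : ℝ))
include hf hf_pos hM hf_le hφ

lemma phi_zero (ω : PathSpace d) : φ ω 0 = 0 := by
  have h := hφ ω 0
  rw [NNReal.coe_zero, ← psi_zero hf hf_pos ω] at h
  have h2 : ((φ ω 0 : ℝ≥0) : ℝ) = ((0 : ℝ≥0) : ℝ) := by
    simpa using psi_inj hf hf_pos ω h
  exact NNReal.coe_injective h2

lemma map_S_eq (μ : Measure (PathSpace d)) [IsProbabilityMeasure μ]
    (hshift : ∀ τ : ℝ≥0, MeasurePreserving (pathShift d τ) μ μ) (τ : ℝ≥0) :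
    Measure.map (fun ω => pathShift d (φ ω τ) ω)
      (μ.withDensity fun ω => ENNReal.ofReal (1 / f (ω (0:ℝ≥0))))
      = μ.withDensity fun ω => ENNReal.ofReal (1 / f (ω (0:ℝ≥0))) := by
  have hS : Measurable fun ω => pathShift d (φ ω τ) ω :=
    (S_cont hf hf_pos hM hf_le hφ τ).measurable
  ext B hB
  rw [Measure.map_apply hS hB, withDensity_apply _ (hS hB), withDensity_apply _ hB]
  set A : ℝ → ℝ≥0∞ := fun v => ∫⁻ ω, B.indicator (fun _ => (1:ℝ≥0∞))
    (pathShift d (φ ω v.toNNReal) ω) * ENNReal.ofReal (1 / f (ω (0:ℝ≥0))) ∂μ with hA_def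
  have hleft : ∫⁻ ω in (fun ω => pathShift d (φ ω τ) ω) ⁻¹' B,
      ENNReal.ofReal (1 / f (ω (0:ℝ≥0))) ∂μ = A ↑τ := by
    rw [← lintegral_indicator (hS hB)]
    simp only [hA_def, Real.toNNReal_coe]
    apply lintegral_congr
    intro ω
    by_cases h : pathShift d (φ ω τ) ω ∈ B
    · simp [Set.indicator_of_mem, h, Set.mem_preimage]
    · simp [Set.indicator_of_notMem, h, Set.mem_preimage]
  have hright : ∫⁻ ω in B, ENNReal.ofReal (1 / f (ω (0:ℝ≥0))) ∂μ = A 0 := by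
    rw [← lintegral_indicator hB]
    simp only [hA_def, Real.toNNReal_zero]
    apply lintegral_congr
    intro ω
    rw [phi_zero hf hf_pos hM hf_le hφ ω, pathShift_zero]
    by_cases h : ω ∈ B <;> simp [h]
  rw [hleft, hright]
  -- the two-sided bound
  have hbound : ∀ (v : ℝ), 0 ≤ v → ∀ T : ℝ, 0 ≤ T →
      ENNReal.ofReal T * A v ≤ ENNReal.ofReal T * A 0 + ENNReal.ofReal v ∧
      ENNReal.ofReal T * A 0 ≤ ENNReal.ofReal T * A v + ENNReal.ofReal v := by
    intro v hv T hT
    have h1 := time_avg hf hf_pos hM hf_le hφ μ hshift B hB hv hT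
    have h0 := time_avg hf hf_pos hM hf_le hφ μ hshift B hB (le_refl (0:ℝ)) hT
    simp only [add_zero, Real.toNNReal_coe] at h1 h0
    set G : PathSpace d → ℝ → ℝ≥0∞ := fun ω x =>
      B.indicator (fun _ => (1:ℝ≥0∞)) (pathShift d (φ ω x.toNNReal) ω) with hG_def
    have hGle : ∀ ω x, G ω x ≤ 1 := by
      intro ω x
      by_cases h : pathShift d (φ ω x.toNNReal) ω ∈ B <;> simp [hG_def, h]
    have hIccle : ∀ (a b : ℝ) (ω : PathSpace d), a ≤ b →
        ∫⁻ x in Icc a b, G ω x ∂volume ≤ ENNReal.ofReal (b - a) := by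
      intro a b ω hab
      calc ∫⁻ x in Icc a b, G ω x ∂volume ≤ ∫⁻ _ in Icc a b, 1 ∂volume :=
        lintegral_mono fun x => hGle ω x
      _ = volume (Icc a b) := by rw [setLIntegral_one]
      _ = ENNReal.ofReal (b - a) := Real.volume_Icc
    have hpt1 : ∀ ω : PathSpace d, ∫⁻ x in Icc v (psi d f ω T + v), G ω x ∂volume
        ≤ (∫⁻ x in Icc 0 (psi d f ω T), G ω x ∂volume) + ENNReal.ofReal v := by
      intro ω
      have hc : 0 ≤ psi d f ω T := psi_nonneg hf hf_pos ω hT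
      have hsub : Icc v (psi d f ω T + v)
          ⊆ Icc 0 (psi d f ω T) ∪ Icc (psi d f ω T) (psi d f ω T + v) := by
        intro x hx
        rcases le_total x (psi d f ω T) with h | h
        · exact Or.inl ⟨le_trans hv hx.1, h⟩
        · exact Or.inr ⟨h, hx.2⟩
      calc ∫⁻ x in Icc v (psi d f ω T + v), G ω x ∂volume
          ≤ ∫⁻ x in Icc 0 (psi d f ω T) ∪ Icc (psi d f ω T) (psi d f ω T + v),
              G ω x ∂volume := lintegral_mono_set hsub
        _ ≤ (∫⁻ x in Icc 0 (psi d f ω T), G ω x ∂volume)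
            + ∫⁻ x in Icc (psi d f ω T) (psi d f ω T + v), G ω x ∂volume :=
            lintegral_union_le _ _ _
        _ ≤ (∫⁻ x in Icc 0 (psi d f ω T), G ω x ∂volume) + ENNReal.ofReal v := by
            refine add_le_add_right ?_ _
            have := hIccle (psi d f ω T) (psi d f ω T + v) ω (by linarith)
            simpa using this
    have hpt0 : ∀ ω : PathSpace d, ∫⁻ x in Icc 0 (psi d f ω T), G ω x ∂volume
        ≤ (∫⁻ x in Icc v (psi d f ω T + v), G ω x ∂volume) + ENNReal.ofReal v := by
      intro ω
      have hc : 0 ≤ psi d f ω T := psi_nonneg hf hf_pos ω hT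
      have hsub : Icc 0 (psi d f ω T)
          ⊆ Icc v (psi d f ω T + v) ∪ Icc 0 v := by
        intro x hx
        rcases le_total x v with h | h
        · exact Or.inr ⟨hx.1, h⟩
        · exact Or.inl ⟨h, by linarith [hx.2]⟩
      calc ∫⁻ x in Icc 0 (psi d f ω T), G ω x ∂volume
          ≤ ∫⁻ x in Icc v (psi d f ω T + v) ∪ Icc 0 v, G ω x ∂volume :=
            lintegral_mono_set hsub
        _ ≤ (∫⁻ x in Icc v (psi d f ω T + v), G ω x ∂volume)
            + ∫⁻ x in Icc 0 v, G ω x ∂volume := lintegral_union_le _ _ _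
        _ ≤ (∫⁻ x in Icc v (psi d f ω T + v), G ω x ∂volume) + ENNReal.ofReal v := by
            refine add_le_add_right ?_ _
            have := hIccle 0 v ω hv
            simpa using this
    constructor
    · rw [h1, h0]
      calc ∫⁻ ω, (∫⁻ x in Icc v (psi d f ω T + v), G ω x ∂volume) ∂μ
          ≤ ∫⁻ ω, ((∫⁻ x in Icc 0 (psi d f ω T), G ω x ∂volume) + ENNReal.ofReal v) ∂μ :=
            lintegral_mono hpt1
        _ = (∫⁻ ω, (∫⁻ x in Icc 0 (psi d f ω T), G ω x ∂volume) ∂μ) + ENNReal.ofReal v := by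
            rw [lintegral_add_right _ measurable_const, lintegral_const, measure_univ, mul_one]
    · rw [h1, h0]
      calc ∫⁻ ω, (∫⁻ x in Icc 0 (psi d f ω T), G ω x ∂volume) ∂μ
          ≤ ∫⁻ ω, ((∫⁻ x in Icc v (psi d f ω T + v), G ω x ∂volume) + ENNReal.ofReal v) ∂μ :=
            lintegral_mono hpt0
        _ = (∫⁻ ω, (∫⁻ x in Icc v (psi d f ω T + v), G ω x ∂volume) ∂μ) + ENNReal.ofReal v := by
            rw [lintegral_add_right _ measurable_const, lintegral_const, measure_univ, mul_one]
  -- conclude A ↑τ = A 0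
  have main : ∀ (a b : ℝ≥0∞), (∀ T : ℝ, 0 ≤ T →
      ENNReal.ofReal T * a ≤ ENNReal.ofReal T * b + ENNReal.ofReal ↑τ) → a ≤ b := by
    intro a b h
    apply ENNReal.le_of_forall_pos_le_add
    intro ε hε _
    have hεR : (0:ℝ) < ↑ε := hε
    set T : ℝ := max 1 (↑τ / ↑ε) with hT_def
    have hT0 : (0:ℝ) < T := lt_of_lt_of_le one_pos (le_max_left _ _)
    have hτT : ENNReal.ofReal ↑τ ≤ ENNReal.ofReal T * ↑ε := by
      rw [← ENNReal.ofReal_coe_nnreal, ← ENNReal.ofReal_mul hT0.le]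
      apply ENNReal.ofReal_le_ofReal
      have hdiv : (↑τ:ℝ) / ↑ε ≤ T := le_max_right _ _
      rw [div_le_iff₀ hεR] at hdiv
      linarith
    have h2 : ENNReal.ofReal T * a ≤ ENNReal.ofReal T * (b + ↑ε) := by
      calc ENNReal.ofReal T * a ≤ ENNReal.ofReal T * b + ENNReal.ofReal ↑τ := h T hT0.le
      _ ≤ ENNReal.ofReal T * b + ENNReal.ofReal T * ↑ε := add_le_add_right hτT _
      _ = ENNReal.ofReal T * (b + ↑ε) := (mul_add _ _ _).symm
    exact (ENNReal.mul_le_mul_iff_right (ENNReal.ofReal_pos.2 hT0).ne' ENNReal.ofReal_ne_top).1 h2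
  have hτ0 : (0:ℝ) ≤ ↑τ := τ.coe_nonneg
  apply le_antisymm
  · exact main _ _ fun T hT => (hbound ↑τ hτ0 T hT).1
  · exact main _ _ fun T hT => (hbound ↑τ hτ0 T hT).2

end MapS
end Stmt2Aux
/-- If every shift `θ_τ` preserves the probability measure `μ` on path space
and `q₀ = ∫ 1/f(ω(0)) dμ(ω) < ∞`, then the time-change map `Φ(ω) = ω ∘ φ_ω` (where `φ_ω`
is the inverse of `ψ_ω`) is Borel measurable, and the pushforward `P'` under `Φ` of the
measure with density `ω ↦ q₀⁻¹/f(ω(0))` w.r.t. `μ` is a probability measure invariant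
under every shift `θ_τ` (the time-changed process is stationary under `P'`). -/
theorem stmt2 (d : ℕ) (f : EuclideanSpace ℝ (Fin d) → ℝ) (hf : Continuous f)
    (M : ℝ) (hM : 0 < M) (hf_pos : ∀ x, 0 < f x) (hf_le : ∀ x, f x ≤ M)
    (φ : PathSpace d → ℝ≥0 → ℝ≥0)
    (hφ : ∀ ω (t : ℝ≥0), psi d f ω (φ ω t) = (t : ℝ))
    (Φ : PathSpace d → PathSpace d)
    (hΦ : ∀ ω (t : ℝ≥0), Φ ω t = ω (φ ω t))
    (μ : Measure (PathSpace d)) [IsProbabilityMeasure μ]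
    (hshift : ∀ τ : ℝ≥0, MeasurePreserving (pathShift d τ) μ μ)
    (h_int : Integrable (fun ω : PathSpace d => 1 / f (ω (0 : ℝ≥0))) μ)
    (q₀ : ℝ) (hq₀ : q₀ = ∫ ω, 1 / f (ω (0 : ℝ≥0)) ∂μ)
    (P' : Measure (PathSpace d))
    (hP' : P' = Measure.map Φ
      (μ.withDensity fun ω => ENNReal.ofReal (q₀⁻¹ * (1 / f (ω (0 : ℝ≥0)))))) :
    Measurable Φ ∧ IsProbabilityMeasure P' ∧
      ∀ τ : ℝ≥0, MeasurePreserving (pathShift d τ) P' P' := by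
  classical
  -- measurability of Φ
  let phiCM : C(PathSpace d × ℝ≥0, ℝ≥0) :=
    ⟨fun p => φ p.1 p.2, Stmt2Aux.phi_cont hf hf_pos hM hf_le hφ⟩
  have hΦeq : Φ = fun ω => ω.comp (phiCM.curry ω) := by
    funext ω
    exact ContinuousMap.ext fun t => by rw [hΦ]; rfl
  have hΦcont : Continuous Φ := by
    rw [hΦeq]
    exact ContinuousMap.continuous_comp'.comp
      (phiCM.curry.continuous.prodMk continuous_id)
  have hΦmeas : Measurable Φ := hΦcont.measurable
  -- positivity of q₀
  have hq0pos : 0 < q₀ := by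
    have h1 : (1/M : ℝ) ≤ q₀ := by
      rw [hq₀]
      have := integral_mono (integrable_const (1/M : ℝ)) h_int
        (fun ω => one_div_le_one_div_of_le (hf_pos _) (hf_le _))
      simpa [measure_univ] using this
    have : (0:ℝ) < 1/M := by positivity
    linarith
  -- density measurability
  have hwq : Measurable fun ω : PathSpace d => ENNReal.ofReal (1 / f (ω (0:ℝ≥0))) := by
    apply ENNReal.measurable_ofReal.comp
    exact (continuous_const.div (hf.comp (continuous_eval_const (0:ℝ≥0)))
      (fun ω => (hf_pos _).ne')).measurable
  -- measure with density splits as a scalar multiple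
  have hdens : (fun ω : PathSpace d => ENNReal.ofReal (q₀⁻¹ * (1 / f (ω (0:ℝ≥0)))))
      = fun ω => (ENNReal.ofReal q₀⁻¹ • fun ω' : PathSpace d =>
          ENNReal.ofReal (1 / f (ω' (0:ℝ≥0)))) ω := by
    funext ω
    simp only [Pi.smul_apply, smul_eq_mul]
    exact ENNReal.ofReal_mul (inv_nonneg.2 hq0pos.le)
  -- P' is a probability measure
  have hprob : IsProbabilityMeasure P' := by
    constructor
    rw [hP', Measure.map_apply hΦmeas MeasurableSet.univ, preimage_univ,
      withDensity_apply _ MeasurableSet.univ, Measure.restrict_univ]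
    have hint2 : Integrable (fun ω : PathSpace d => q₀⁻¹ * (1 / f (ω (0:ℝ≥0)))) μ :=
      h_int.const_mul _
    have hnn : 0 ≤ᶠ[ae μ] fun ω : PathSpace d => q₀⁻¹ * (1 / f (ω (0:ℝ≥0))) := by
      apply ae_of_all
      intro ω
      have := (hf_pos (ω (0:ℝ≥0))).le
      positivity
    rw [← MeasureTheory.ofReal_integral_eq_lintegral_ofReal hint2 hnn,
      integral_const_mul, ← hq₀, inv_mul_cancel₀ hq0pos.ne', ENNReal.ofReal_one]
  refine ⟨hΦmeas, hprob, ?_⟩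
  intro τ
  have hθcont : Continuous (pathShift d τ) :=
    Stmt2Aux.theta_cont.comp (continuous_const.prodMk continuous_id)
  have hθmeas : Measurable (pathShift d τ) := hθcont.measurable
  refine ⟨hθmeas, ?_⟩
  have hSmeas : Measurable fun ω : PathSpace d => pathShift d (φ ω τ) ω :=
    (Stmt2Aux.S_cont hf hf_pos hM hf_le hφ τ).measurable
  rw [hP', Measure.map_map hθmeas hΦmeas]
  have hcomm : (pathShift d τ) ∘ Φ = Φ ∘ (fun ω => pathShift d (φ ω τ) ω) :=
    funext fun ω => (Stmt2Aux.Phi_S hf hf_pos hM hf_le hφ Φ hΦ τ ω).symm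
  rw [hcomm, ← Measure.map_map hΦmeas hSmeas]
  congr 1
  rw [hdens]
  have hsmul := MeasureTheory.withDensity_smul (μ := μ) (ENNReal.ofReal q₀⁻¹) hwq
  rw [hsmul, Measure.map_smul,
    Stmt2Aux.map_S_eq hf hf_pos hM hf_le hφ μ hshift τ]
end
end

section
/- Let Ω = C([0,∞), ℝ^d) with the shift maps θ_τ, f : ℝ^d → ℝ continuous with 0 < f(x) ≤ M for all x, Φ : Ω → Ω the time-change map, μ a probability measure on Ω with θ_τ measure-preserving for μ for every τ ≥ 0 and q₀ := ∫ 1/f(ω(0)) dμ(ω) < ∞, and let P' be the pushforward under Φ of the measure with density q₀⁻¹/f(ω(0)) with respect to μ. If μ is ergodic for the shift flow, i.e., every Borel set A ⊆ Ω with θ_τ⁻¹(A) = A for all τ ≥ 0 satisfies μ(A) ∈ {0,1}, then P' is also ergodic for the shift flow: every Borel set A with θ_τ⁻¹(A) = A for all τ ≥ 0 satisfies P'(A) ∈ {0,1}. -/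
open MeasureTheory Set Filter Topology
open scoped NNReal

noncomputable section

set_option maxHeartbeats 2000000 in
/-- In the setting of the dependent time change on path space, if `μ` is
ergodic for the shift flow (every Borel set invariant under all shifts has measure 0
or 1), then the stationary measure `P'` of the time-changed process (the pushforward
under `Φ` of the measure with density `q₀⁻¹/f(ω(0))` w.r.t. `μ`) is also ergodic for the
shift flow. -/
theorem stmt3 (d : ℕ) (f : EuclideanSpace ℝ (Fin d) → ℝ) (hf : Continuous f)
    (M : ℝ) (hM : 0 < M) (hf_pos : ∀ x, 0 < f x) (hf_le : ∀ x, f x ≤ M)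
    (φ : PathSpace d → ℝ≥0 → ℝ≥0)
    (hφ : ∀ ω (t : ℝ≥0), psi d f ω (φ ω t) = (t : ℝ))
    (Φ : PathSpace d → PathSpace d)
    (hΦ : ∀ ω (t : ℝ≥0), Φ ω t = ω (φ ω t))
    (μ : Measure (PathSpace d)) [IsProbabilityMeasure μ]
    (hshift : ∀ τ : ℝ≥0, MeasurePreserving (pathShift d τ) μ μ)
    (h_int : Integrable (fun ω : PathSpace d => 1 / f (ω (0 : ℝ≥0))) μ)
    (q₀ : ℝ) (hq₀ : q₀ = ∫ ω, 1 / f (ω (0 : ℝ≥0)) ∂μ)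
    (P' : Measure (PathSpace d))
    (hP' : P' = Measure.map Φ
      (μ.withDensity fun ω => ENNReal.ofReal (q₀⁻¹ * (1 / f (ω (0 : ℝ≥0))))))
    (h_erg : ∀ A : Set (PathSpace d), MeasurableSet A →
      (∀ τ : ℝ≥0, pathShift d τ ⁻¹' A = A) → μ A = 0 ∨ μ A = 1) :
    ∀ A : Set (PathSpace d), MeasurableSet A →
      (∀ τ : ℝ≥0, pathShift d τ ⁻¹' A = A) → P' A = 0 ∨ P' A = 1 := by
  intro A hA hAinv
  -- the density and the measure ν
  set g : PathSpace d → ENNReal :=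
    fun ω => ENNReal.ofReal (q₀⁻¹ * (1 / f (ω (0 : ℝ≥0)))) with hg
  set ν : Measure (PathSpace d) := μ.withDensity g with hν
  -- positivity of q₀
  have hq₀pos : 0 < q₀ := by
    have h1 : ∀ ω : PathSpace d, M⁻¹ ≤ 1 / f (ω (0:ℝ≥0)) := fun ω => by
      rw [one_div]
      exact inv_anti₀ (hf_pos _) (hf_le _)
    have h2 := integral_mono (integrable_const (M⁻¹ : ℝ)) h_int h1
    rw [integral_const] at h2
    simp only [probReal_univ, ENNReal.toReal_one, smul_eq_mul, one_mul] at h2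
    have : (0:ℝ) < M⁻¹ := inv_pos.2 hM
    rw [hq₀]; linarith
  -- continuity/measurability of the density
  have heval : Continuous fun ω : PathSpace d => ω (0:ℝ≥0) :=
    ContinuousEvalConst.continuous_eval_const _
  have hgcont : Continuous fun ω : PathSpace d => q₀⁻¹ * (1 / f (ω (0:ℝ≥0))) :=
    continuous_const.mul (continuous_const.div (hf.comp heval) fun ω => (hf_pos _).ne')
  have hgmeas : Measurable g := (ENNReal.continuous_ofReal.comp hgcont).measurable
  have hgpos : ∀ ω, 0 < g ω := fun ω =>
    ENNReal.ofReal_pos.2 (mul_pos (inv_pos.2 hq₀pos) (div_pos one_pos (hf_pos _)))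
  -- ν ≪ μ and μ ≪ ν
  have hνμ : ν ≪ μ := withDensity_absolutelyContinuous μ g
  have hμν : μ ≪ ν := by
    intro s hs0
    set t := toMeasurable ν s with ht
    have htm : MeasurableSet t := measurableSet_toMeasurable ν s
    have htv : ν t = 0 := by rw [ht, measure_toMeasurable]; exact hs0
    rw [hν, withDensity_apply g htm, lintegral_eq_zero_iff hgmeas] at htv
    have : (μ.restrict t) {ω | g ω ≠ 0} = 0 := htv
    have huniv : {ω : PathSpace d | g ω ≠ 0} = Set.univ := by
      ext ω; simp [(hgpos ω).ne']
    rw [huniv, Measure.restrict_apply_univ] at this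
    exact measure_mono_null (subset_toMeasurable ν s) this
  -- ν is a probability measure
  have hν1 : ν Set.univ = 1 := by
    have hint2 : Integrable (fun ω : PathSpace d => q₀⁻¹ * (1 / f (ω (0:ℝ≥0)))) μ :=
      h_int.const_mul _
    have hnn : 0 ≤ᶠ[ae μ] fun ω : PathSpace d => q₀⁻¹ * (1 / f (ω (0:ℝ≥0))) :=
      Filter.Eventually.of_forall fun ω =>
        le_of_lt (mul_pos (inv_pos.2 hq₀pos) (div_pos one_pos (hf_pos _)))
    have h1 := ofReal_integral_eq_lintegral_ofReal hint2 hnn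
    have h2 : ∫ ω, q₀⁻¹ * (1 / f (ω (0:ℝ≥0))) ∂μ = 1 := by
      rw [integral_const_mul, ← hq₀, inv_mul_cancel₀ hq₀pos.ne']
    rw [hν, withDensity_apply g MeasurableSet.univ, Measure.restrict_univ]
    rw [← h1, h2, ENNReal.ofReal_one]
  by_cases hΦm : AEMeasurable Φ ν
  swap
  · left; rw [hP', Measure.map_of_not_aemeasurable hΦm]
    simp
  -- P' applied to A
  have hP'A : P' A = ν (Φ ⁻¹' A) := by
    rw [hP', Measure.map_apply_of_aemeasurable hΦm hA]
  -- psi machinery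
  have hcont_int : ∀ ω : PathSpace d, Continuous fun s : ℝ => 1 / f (ω s.toNNReal) :=
    fun ω => continuous_const.div
      ((hf.comp ω.continuous).comp continuous_real_toNNReal) fun s => (hf_pos _).ne'
  have hii : ∀ (ω : PathSpace d) (a b : ℝ),
      IntervalIntegrable (fun s : ℝ => 1 / f (ω s.toNNReal)) volume a b :=
    fun ω a b => (hcont_int ω).intervalIntegrable a b
  have hpsi_mono : ∀ ω : PathSpace d, StrictMono (psi d f ω) := by
    intro ω a b hab
    have hadd := intervalIntegral.integral_add_adjacent_intervals (hii ω 0 a) (hii ω a b)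
    have hpos := intervalIntegral.intervalIntegral_pos_of_pos (hii ω a b)
      (fun x => div_pos one_pos (hf_pos _)) hab
    show psi d f ω a < psi d f ω b
    simp only [psi] at hadd ⊢
    linarith
  have hpsi0 : ∀ ω : PathSpace d, psi d f ω 0 = 0 := fun ω => intervalIntegral.integral_same
  have hpsi_nonneg : ∀ (ω : PathSpace d) (t : ℝ), 0 ≤ t → 0 ≤ psi d f ω t := by
    intro ω t ht
    rcases eq_or_lt_of_le ht with h | h
    · rw [← h, hpsi0]
    · rw [← hpsi0 ω]; exact le_of_lt (hpsi_mono ω h)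
  -- shift formula for psi
  have hpsi_shift : ∀ (τ : ℝ≥0) (ω : PathSpace d) (t : ℝ), 0 ≤ t →
      psi d f (pathShift d τ ω) t = psi d f ω (t + τ) - psi d f ω τ := by
    intro τ ω t ht
    have h1 := intervalIntegral.integral_add_adjacent_intervals
      (hii ω 0 τ) (hii ω τ (t + τ))
    have h2 := intervalIntegral.integral_comp_add_right
      (a := 0) (b := t) (fun s : ℝ => 1 / f (ω s.toNNReal)) (τ : ℝ)
    rw [zero_add] at h2
    have h3 : Set.EqOn (fun s : ℝ => 1 / f ((pathShift d τ ω) s.toNNReal))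
        (fun s : ℝ => 1 / f (ω (s + (τ:ℝ)).toNNReal)) (Set.uIcc 0 t) := by
      intro s hs
      rw [Set.uIcc_of_le ht] at hs
      have hs0 : (0:ℝ) ≤ s := hs.1
      show 1 / f (ω (s.toNNReal + τ)) = 1 / f (ω (s + (τ:ℝ)).toNNReal)
      rw [Real.toNNReal_add hs0 τ.coe_nonneg, Real.toNNReal_coe]
    have h4 : psi d f (pathShift d τ ω) t
        = ∫ s in (0:ℝ)..t, 1 / f (ω (s + (τ:ℝ)).toNNReal) :=
      intervalIntegral.integral_congr h3
    show psi d f (pathShift d τ ω) t = psi d f ω (t + τ) - psi d f ω τ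
    rw [h4, h2]
    simp only [psi] at h1 ⊢
    linarith
  -- commutation of Φ with shifts
  have hcomm : ∀ (τ : ℝ≥0) (ω : PathSpace d),
      Φ (pathShift d τ ω) = pathShift d ((psi d f ω τ).toNNReal) (Φ ω) := by
    intro τ ω
    apply ContinuousMap.ext; intro t
    set s : ℝ≥0 := (psi d f ω τ).toNNReal with hsdef
    have hsc : (s : ℝ) = psi d f ω τ :=
      Real.coe_toNNReal _ (hpsi_nonneg ω τ τ.coe_nonneg)
    set u : ℝ≥0 := φ (pathShift d τ ω) t with hudef
    have hu : psi d f (pathShift d τ ω) u = (t : ℝ) := hφ (pathShift d τ ω) t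
    have h1 : psi d f ω ((u:ℝ) + τ) = (t:ℝ) + psi d f ω τ := by
      have := hpsi_shift τ ω u u.coe_nonneg
      rw [hu] at this
      linarith
    have h2 : psi d f ω (φ ω (t + s)) = (t:ℝ) + psi d f ω τ := by
      have := hφ ω (t + s)
      rw [NNReal.coe_add, hsc] at this
      exact this
    have h3 : ((φ ω (t + s) : ℝ≥0) : ℝ) = (u:ℝ) + (τ:ℝ) :=
      (hpsi_mono ω).injective (h2.trans h1.symm)
    have h4 : φ ω (t + s) = u + τ := by
      have : ((φ ω (t + s) : ℝ≥0) : ℝ) = ((u + τ : ℝ≥0) : ℝ) := by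
        rw [h3, NNReal.coe_add]
      exact_mod_cast this
    calc Φ (pathShift d τ ω) t = (pathShift d τ ω) u := hΦ _ t
      _ = ω (u + τ) := rfl
      _ = ω (φ ω (t + s)) := by rw [h4]
      _ = Φ ω (t + s) := (hΦ ω (t + s)).symm
      _ = pathShift d s (Φ ω) t := rfl
  -- invariance of Φ⁻¹' A
  have hSinv : ∀ τ : ℝ≥0, pathShift d τ ⁻¹' (Φ ⁻¹' A) = Φ ⁻¹' A := by
    intro τ
    ext ω
    simp only [Set.mem_preimage]
    rw [hcomm τ ω]
    constructor
    · intro h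
      have : Φ ω ∈ pathShift d ((psi d f ω τ).toNNReal) ⁻¹' A := h
      rwa [hAinv] at this
    · intro h
      have : Φ ω ∈ pathShift d ((psi d f ω τ).toNNReal) ⁻¹' A := by rwa [hAinv]
      exact this
  -- measurable version B₀ of Φ⁻¹' A
  set Φ' : PathSpace d → PathSpace d := hΦm.mk Φ with hΦ'def
  set B₀ : Set (PathSpace d) := Φ' ⁻¹' A with hB₀def
  have hB₀meas : MeasurableSet B₀ := hΦm.measurable_mk hA
  set NΔ : Set (PathSpace d) :=
    ((Φ ⁻¹' A) \ B₀) ∪ (B₀ \ (Φ ⁻¹' A)) with hNΔdef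
  have hNΔsub : NΔ ⊆ {ω | Φ ω ≠ Φ' ω} := by
    intro ω hω
    intro heq
    have h1 : (ω ∈ Φ ⁻¹' A) ↔ (ω ∈ B₀) := by
      simp only [hB₀def, Set.mem_preimage, heq]
    rcases hω with h | h
    · exact h.2 (h1.1 h.1)
    · exact h.2 (h1.2 h.1)
  have hNΔν : ν NΔ = 0 := by
    refine measure_mono_null hNΔsub ?_
    have := hΦm.ae_eq_mk
    rw [Filter.EventuallyEq, ae_iff] at this
    exact this
  have hNΔμ : μ NΔ = 0 := hμν hNΔν
  -- a.e. invariance of B₀ for each shift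
  have hmismatch : ∀ τ : ℝ≥0,
      μ {ω | ¬ (pathShift d τ ω ∈ B₀ ↔ ω ∈ B₀)} = 0 := by
    intro τ
    refine measure_mono_null (fun ω hω => ?_)
      (measure_union_null hNΔμ
        ((hshift τ).quasiMeasurePreserving.preimage_null hNΔμ)
        : μ (NΔ ∪ pathShift d τ ⁻¹' NΔ) = 0)
    by_cases h1 : ω ∈ NΔ
    · exact Or.inl h1
    by_cases h2 : pathShift d τ ω ∈ NΔ
    · exact Or.inr h2
    exfalso
    apply hω
    have e1 : (ω ∈ Φ ⁻¹' A) ↔ (ω ∈ B₀) := by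
      by_contra hc
      exact h1 (by rw [hNΔdef]; simp only [Set.mem_union, Set.mem_diff]; tauto)
    have e2 : (pathShift d τ ω ∈ Φ ⁻¹' A) ↔ (pathShift d τ ω ∈ B₀) := by
      by_contra hc
      exact h2 (by rw [hNΔdef]; simp only [Set.mem_union, Set.mem_diff]; tauto)
    have e3 : (pathShift d τ ω ∈ Φ ⁻¹' A) ↔ (ω ∈ Φ ⁻¹' A) := by
      rw [← Set.mem_preimage, hSinv τ]
    tauto
  -- the jointly measurable flow
  set Θ : ℝ × PathSpace d → PathSpace d :=
    fun p => pathShift d p.1.toNNReal p.2 with hΘdef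
  have hΘcont : Continuous Θ := by
    have hc : Continuous fun τ : ℝ => (⟨fun t => t + τ.toNNReal,
        continuous_id.add continuous_const⟩ : C(ℝ≥0, ℝ≥0)) := by
      apply ContinuousMap.continuous_of_continuous_uncurry
      exact continuous_snd.add (continuous_real_toNNReal.comp continuous_fst)
    exact ContinuousMap.continuous_comp'.comp (hc.prodMap continuous_id)
  have hΘmeas : Measurable Θ := hΘcont.measurable
  -- product-null mismatch set
  set K : Set (ℝ × PathSpace d) := {p | ¬ (Θ p ∈ B₀ ↔ p.2 ∈ B₀)} with hKdef
  have hKmeas : MeasurableSet K := by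
    have h1 : MeasurableSet {p : ℝ × PathSpace d | Θ p ∈ B₀} := hΘmeas hB₀meas
    have h2 : MeasurableSet {p : ℝ × PathSpace d | p.2 ∈ B₀} :=
      measurable_snd hB₀meas
    have : K = ({p : ℝ × PathSpace d | Θ p ∈ B₀} \ {p | p.2 ∈ B₀})
        ∪ ({p : ℝ × PathSpace d | p.2 ∈ B₀} \ {p | Θ p ∈ B₀}) := by
      ext p
      simp only [hKdef, Set.mem_setOf_eq, Set.mem_union, Set.mem_diff]
      tauto
    rw [this]
    exact ((h1.diff h2).union (h2.diff h1))
  have hslice : ∀ τ : ℝ, μ (Prod.mk τ ⁻¹' K) = 0 := fun τ => hmismatch τ.toNNReal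
  have hprodK : (volume.prod μ) K = 0 := by
    rw [Measure.prod_apply hKmeas]
    simp only [hslice]
    simp
  have haeω : ∀ᵐ ω ∂μ, volume ((fun τ : ℝ => (τ, ω)) ⁻¹' K) = 0 := by
    have h := Measure.prod_apply_symm (μ := (volume : Measure ℝ)) (ν := μ) hKmeas
    rw [hprodK] at h
    have hm := measurable_measure_prodMk_right (μ := (volume : Measure ℝ)) hKmeas
    rw [eq_comm, lintegral_eq_zero_iff hm] at h
    filter_upwards [h] with ω hω using hω
  -- the exactly invariant measurable set C
  set C : Set (PathSpace d) :=
    {ω | ∃ n : ℕ, volume {τ : ℝ | (n:ℝ) ≤ τ ∧ Θ (τ, ω) ∉ B₀} = 0} with hCdef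
  have hCmeas : MeasurableSet C := by
    have h1 : ∀ n : ℕ, MeasurableSet {p : ℝ × PathSpace d | (n:ℝ) ≤ p.1 ∧ Θ p ∉ B₀} := by
      intro n
      exact (measurable_fst measurableSet_Ici).inter (hΘmeas hB₀meas).compl
    have h2 : ∀ n : ℕ, Measurable fun ω : PathSpace d =>
        volume ((fun τ : ℝ => (τ, ω)) ⁻¹' {p : ℝ × PathSpace d | (n:ℝ) ≤ p.1 ∧ Θ p ∉ B₀}) :=
      fun n => measurable_measure_prodMk_right (h1 n)
    have h3 : C = ⋃ n : ℕ, (fun ω : PathSpace d =>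
        volume ((fun τ : ℝ => (τ, ω)) ⁻¹' {p : ℝ × PathSpace d | (n:ℝ) ≤ p.1 ∧ Θ p ∉ B₀}))
          ⁻¹' {0} := by
      ext ω
      simp only [hCdef, Set.mem_setOf_eq, Set.mem_iUnion, Set.mem_preimage,
        Set.mem_singleton_iff]
      rfl
    rw [h3]
    exact MeasurableSet.iUnion fun n => (h2 n) (measurableSet_singleton 0)
  -- semigroup property
  have hcomp : ∀ (a b : ℝ≥0) (ω : PathSpace d),
      pathShift d a (pathShift d b ω) = pathShift d (a + b) ω := by
    intro a b ω
    apply ContinuousMap.ext; intro t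
    show ω (t + a + b) = ω (t + (a + b))
    rw [add_assoc]
  have hkey : ∀ (σ : ℝ≥0) (ω : PathSpace d) (τ : ℝ), 0 ≤ τ →
      Θ (τ, pathShift d σ ω) = Θ (τ + σ, ω) := by
    intro σ ω τ hτ
    show pathShift d τ.toNNReal (pathShift d σ ω) = pathShift d (τ + (σ:ℝ)).toNNReal ω
    rw [hcomp, Real.toNNReal_add hτ σ.coe_nonneg, Real.toNNReal_coe]
  -- translation computation
  have htrans : ∀ (ω : PathSpace d) (c : ℝ) (n : ℝ),
      volume {τ : ℝ | n ≤ τ ∧ Θ (τ + c, ω) ∉ B₀}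
        = volume {τ : ℝ | n + c ≤ τ ∧ Θ (τ, ω) ∉ B₀} := by
    intro ω c n
    have : {τ : ℝ | n ≤ τ ∧ Θ (τ + c, ω) ∉ B₀}
        = (fun τ : ℝ => τ + c) ⁻¹' {τ : ℝ | n + c ≤ τ ∧ Θ (τ, ω) ∉ B₀} := by
      ext τ
      simp only [Set.mem_setOf_eq, Set.mem_preimage]
      constructor
      · rintro ⟨h1, h2⟩; exact ⟨by linarith, h2⟩
      · rintro ⟨h1, h2⟩; exact ⟨by linarith, h2⟩
    rw [this, measure_preimage_add_right]
  -- exact invariance of C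
  have hCinv : ∀ σ : ℝ≥0, pathShift d σ ⁻¹' C = C := by
    intro σ
    ext ω
    simp only [Set.mem_preimage, hCdef, Set.mem_setOf_eq]
    constructor
    · rintro ⟨n, hn⟩
      have heq : {τ : ℝ | (n:ℝ) ≤ τ ∧ Θ (τ, pathShift d σ ω) ∉ B₀}
          = {τ : ℝ | (n:ℝ) ≤ τ ∧ Θ (τ + (σ:ℝ), ω) ∉ B₀} := by
        ext τ
        simp only [Set.mem_setOf_eq]
        constructor
        · rintro ⟨h1, h2⟩
          exact ⟨h1, by rwa [← hkey σ ω τ (le_trans (Nat.cast_nonneg n) h1)]⟩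
        · rintro ⟨h1, h2⟩
          exact ⟨h1, by rwa [hkey σ ω τ (le_trans (Nat.cast_nonneg n) h1)]⟩
      rw [heq, htrans] at hn
      refine ⟨n + ⌈(σ:ℝ)⌉₊, measure_mono_null (fun τ hτ => ?_) hn⟩
      rcases hτ with ⟨h1, h2⟩
      refine ⟨?_, h2⟩
      have := Nat.le_ceil (σ:ℝ)
      push_cast at h1 ⊢
      linarith
    · rintro ⟨n, hn⟩
      refine ⟨n, ?_⟩
      have heq : {τ : ℝ | (n:ℝ) ≤ τ ∧ Θ (τ, pathShift d σ ω) ∉ B₀}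
          = {τ : ℝ | (n:ℝ) ≤ τ ∧ Θ (τ + (σ:ℝ), ω) ∉ B₀} := by
        ext τ
        simp only [Set.mem_setOf_eq]
        constructor
        · rintro ⟨h1, h2⟩
          exact ⟨h1, by rwa [← hkey σ ω τ (le_trans (Nat.cast_nonneg n) h1)]⟩
        · rintro ⟨h1, h2⟩
          exact ⟨h1, by rwa [hkey σ ω τ (le_trans (Nat.cast_nonneg n) h1)]⟩
      rw [heq, htrans]
      refine measure_mono_null (fun τ hτ => ?_) hn
      rcases hτ with ⟨h1, h2⟩
      exact ⟨by linarith [σ.coe_nonneg], h2⟩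
  -- C agrees with B₀ a.e.
  have hCB₀ : μ {ω | ¬ (ω ∈ C ↔ ω ∈ B₀)} = 0 := by
    rw [ae_iff] at haeω
    push_neg at haeω
    refine measure_mono_null (fun ω hω => ?_) haeω
    simp only [Set.mem_setOf_eq] at hω ⊢
    intro hvol
    apply hω
    by_cases hB : ω ∈ B₀
    · constructor
      · intro _; exact hB
      · intro _
        refine ⟨0, measure_mono_null (fun τ hτ => ?_) hvol⟩
        rcases hτ with ⟨h1, h2⟩
        show ¬ (Θ (τ, ω) ∈ B₀ ↔ ω ∈ B₀)
        tauto
    · constructor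
      · rintro ⟨n, hn⟩
        exfalso
        have hsub : Set.Ici (n:ℝ) ⊆ {τ : ℝ | (n:ℝ) ≤ τ ∧ Θ (τ, ω) ∉ B₀}
            ∪ ((fun τ : ℝ => (τ, ω)) ⁻¹' K) := by
          intro τ hτ
          by_cases hB2 : Θ (τ, ω) ∈ B₀
          · right
            show ¬ (Θ (τ, ω) ∈ B₀ ↔ ω ∈ B₀)
            tauto
          · exact Or.inl ⟨hτ, hB2⟩
        have : volume (Set.Ici (n:ℝ)) = 0 := by
          refine le_antisymm ?_ (zero_le (a := _))
          calc volume (Set.Ici (n:ℝ))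
              ≤ volume ({τ : ℝ | (n:ℝ) ≤ τ ∧ Θ (τ, ω) ∉ B₀}
                ∪ ((fun τ : ℝ => (τ, ω)) ⁻¹' K)) := measure_mono hsub
            _ = 0 := measure_union_null hn hvol
        simp [Real.volume_Ici] at this
      · intro h; exact absurd h hB
  -- conclude via ergodicity applied to C
  rcases h_erg C hCmeas hCinv with hC0 | hC1
  · left
    rw [hP'A]
    have hB₀0 : μ B₀ = 0 := by
      have hU := measure_union_null hC0 hCB₀
      refine measure_mono_null (fun ω hω => ?_) hU
      by_cases h : ω ∈ C
      · exact Or.inl h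
      · exact Or.inr (by simp only [Set.mem_setOf_eq]; tauto)
    have hB₀ν : ν B₀ = 0 := hνμ hB₀0
    have hU2 := measure_union_null hB₀ν hNΔν
    refine measure_mono_null (fun ω hω => ?_) hU2
    by_cases h : ω ∈ B₀
    · exact Or.inl h
    · exact Or.inr (Or.inl ⟨hω, h⟩)
  · right
    rw [hP'A]
    have hCc : μ Cᶜ = 0 := by
      have := measure_compl hCmeas (measure_ne_top μ C)
      rw [hC1, measure_univ] at this
      simp at this
      exact this
    have hB₀c : μ B₀ᶜ = 0 := by
      have hU := measure_union_null hCc hCB₀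
      refine measure_mono_null (fun ω hω => ?_) hU
      by_cases h : ω ∈ C
      · exact Or.inr (by simp only [Set.mem_setOf_eq]; tauto)
      · exact Or.inl h
    have hB₀cν : ν B₀ᶜ = 0 := hνμ hB₀c
    have hScν : ν (Φ ⁻¹' A)ᶜ = 0 := by
      have hU2 := measure_union_null hB₀cν hNΔν
      refine measure_mono_null (fun ω hω => ?_) hU2
      by_cases h : ω ∈ B₀
      · exact Or.inr (Or.inr ⟨h, hω⟩)
      · exact Or.inl h
    have hle : (1:ENNReal) ≤ ν (Φ ⁻¹' A) := by
      have := measure_union_le (μ := ν) (Φ ⁻¹' A) (Φ ⁻¹' A)ᶜ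
      rw [Set.union_compl_self, hν1, hScν, add_zero] at this
      exact this
    refine le_antisymm ?_ hle
    rw [← hν1]
    exact measure_mono (Set.subset_univ _)
end
end

section
/- Let β₀,β₁,β₂,β₁₁,β₁₂,β₂₂ ∈ ℝ with the matrix Q = [[1+β₁₁, β₁₂], [β₁₂, 1+β₂₂]] positive definite, f(y,ẏ) = exp(β₀ + β₁y + β₂ẏ + (β₁₁/2)y² + β₁₂yẏ + (β₂₂/2)ẏ²), and q₀ = (2π)⁻¹ ∬_{ℝ²} exp(−(u²+v²)/2)/f(u,v) du dv. Set σ² = 1/(1+β₁₁ − β₁₂²/(1+β₂₂)) and m = σ²(−β₁ + β₂β₁₂/(1+β₂₂)). Then for every z ∈ ℝ, (2πq₀)⁻¹ ∫_ℝ exp(−(z²+v²)/2)/f(z,v) dv = (2πσ²)^{−1/2} exp(−(z−m)²/(2σ²)); that is, the stationary marginal density of the time-changed process in the quadratic exponential model is the Gaussian density with mean m and variance σ². -/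
open MeasureTheory Real

lemma gauss_lin_pt (k l : ℝ) (hk : 0 < k) (v : ℝ) :
    Real.exp (-(k * v ^ 2) / 2 - l * v)
      = (Real.sqrt (2 * π / k) * Real.exp (l ^ 2 / (2 * k))) *
        ProbabilityTheory.gaussianPDFReal (-l / k) ⟨k⁻¹, by positivity⟩ v := by
  have hs : (0:ℝ) < Real.sqrt (2 * π / k) := Real.sqrt_pos.mpr (by positivity)
  simp only [ProbabilityTheory.gaussianPDFReal, NNReal.coe_mk]
  have h1 : 2 * π * k⁻¹ = 2 * π / k := by ring
  have h2 : -(v - -l / k) ^ 2 / (2 * k⁻¹) = -(k * v ^ 2) / 2 - l * v - l ^ 2 / (2 * k) := by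
    field_simp
    ring
  change _ = _ * ((√(2 * π * k⁻¹))⁻¹ * rexp (-(v - -l / k) ^ 2 / (2 * k⁻¹)))
  rw [h1, h2]
  rw [mul_mul_mul_comm, mul_inv_cancel₀ hs.ne', one_mul, ← Real.exp_add]
  congr 1
  ring

lemma integrable_gauss_lin (k l : ℝ) (hk : 0 < k) :
    Integrable (fun v : ℝ => Real.exp (-(k * v ^ 2) / 2 - l * v)) := by
  simp only [gauss_lin_pt k l hk]
  exact (ProbabilityTheory.integrable_gaussianPDFReal _ _).const_mul _

lemma integral_gauss_lin (k l : ℝ) (hk : 0 < k) :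
    ∫ v : ℝ, Real.exp (-(k * v ^ 2) / 2 - l * v)
      = Real.sqrt (2 * π / k) * Real.exp (l ^ 2 / (2 * k)) := by
  simp only [gauss_lin_pt k l hk]
  rw [MeasureTheory.integral_const_mul]
  convert mul_one _ using 2
  exact ProbabilityTheory.integral_gaussianPDFReal_eq_one _ (by
    change ((⟨k⁻¹, (inv_pos.mpr hk).le⟩ : NNReal)) ≠ 0
    simp only [ne_eq, ← NNReal.coe_eq_zero, NNReal.coe_mk]
    exact fun h => (inv_pos.mpr hk).ne' (congrArg Subtype.val h))

/-- In the quadratic exponential model (with positive definite `Q`),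
the stationary marginal density of the time-changed process,
`z ↦ (2πq₀)⁻¹ ∫ exp(−(z²+v²)/2)/f(z,v) dv`, is the Gaussian density with
variance `σ² = 1/(1+β₁₁ − β₁₂²/(1+β₂₂))` and mean `m = σ²(−β₁ + β₂β₁₂/(1+β₂₂))`. -/
theorem stmt7 (β₀ β₁ β₂ β₁₁ β₁₂ β₂₂ : ℝ)
    (f : ℝ → ℝ → ℝ)
    (hf : ∀ y ydot : ℝ, f y ydot =
      Real.exp (β₀ + β₁ * y + β₂ * ydot + β₁₁ / 2 * y ^ 2 + β₁₂ * y * ydot + β₂₂ / 2 * ydot ^ 2))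
    (hQ : (!![1 + β₁₁, β₁₂; β₁₂, 1 + β₂₂] : Matrix (Fin 2) (Fin 2) ℝ).PosDef)
    (q₀ : ℝ)
    (hq₀ : q₀ = (2 * π)⁻¹ * ∫ p : ℝ × ℝ, Real.exp (-(p.1 ^ 2 + p.2 ^ 2) / 2) / f p.1 p.2)
    (σ2 m : ℝ)
    (hσ2 : σ2 = 1 / (1 + β₁₁ - β₁₂ ^ 2 / (1 + β₂₂)))
    (hm : m = σ2 * (-β₁ + β₂ * β₁₂ / (1 + β₂₂))) :
    ∀ z : ℝ, (2 * π * q₀)⁻¹ * ∫ v : ℝ, Real.exp (-(z ^ 2 + v ^ 2) / 2) / f z v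
      = (Real.sqrt (2 * π * σ2))⁻¹ * Real.exp (-(z - m) ^ 2 / (2 * σ2)) := by
  have hA : 0 < 1 + β₂₂ := by
    have h := hQ.dotProduct_mulVec_pos (x := ![0, 1]) (by intro h; simpa using congrFun h 1)
    simpa [Matrix.mulVec, dotProduct, Fin.sum_univ_two] using h
  have hdet : 0 < (1 + β₁₁) * (1 + β₂₂) - β₁₂ * β₁₂ := by
    have h := hQ.det_pos
    rwa [Matrix.det_fin_two_of] at h
  set A : ℝ := 1 + β₂₂ with hAdef
  set K2 : ℝ := 1 + β₁₁ - β₁₂ ^ 2 / A with hK2def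
  have hK2 : 0 < K2 := by
    rw [hK2def]
    have : 1 + β₁₁ - β₁₂ ^ 2 / A = ((1 + β₁₁) * A - β₁₂ * β₁₂) / A := by
      field_simp
    rw [this]
    exact div_pos hdet hA
  set L : ℝ := β₁ - β₂ * β₁₂ / A with hLdef
  set K : ℝ := Real.sqrt (2 * π / A) * Real.exp (β₂ ^ 2 / (2 * A) - β₀) with hKdef
  have hKpos : 0 < K := by
    rw [hKdef]
    exact mul_pos (Real.sqrt_pos.mpr (by positivity)) (Real.exp_pos _)
  have hpt : ∀ z v : ℝ, Real.exp (-(z ^ 2 + v ^ 2) / 2) / f z v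
      = Real.exp (-(z ^ 2) / 2 - β₀ - β₁ * z - β₁₁ / 2 * z ^ 2) *
        Real.exp (-(A * v ^ 2) / 2 - (β₂ + β₁₂ * z) * v) := by
    intro z v
    rw [hf, ← Real.exp_sub, ← Real.exp_add]
    congr 1
    rw [hAdef]; ring
  have hinner : ∀ z : ℝ, (∫ v : ℝ, Real.exp (-(z ^ 2 + v ^ 2) / 2) / f z v)
      = K * Real.exp (-(K2 * z ^ 2) / 2 - L * z) := by
    intro z
    calc (∫ v : ℝ, Real.exp (-(z ^ 2 + v ^ 2) / 2) / f z v)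
        = ∫ v : ℝ, Real.exp (-(z ^ 2) / 2 - β₀ - β₁ * z - β₁₁ / 2 * z ^ 2) *
            Real.exp (-(A * v ^ 2) / 2 - (β₂ + β₁₂ * z) * v) := by simp only [hpt]
      _ = Real.exp (-(z ^ 2) / 2 - β₀ - β₁ * z - β₁₁ / 2 * z ^ 2) *
            (Real.sqrt (2 * π / A) * Real.exp ((β₂ + β₁₂ * z) ^ 2 / (2 * A))) := by
          rw [MeasureTheory.integral_const_mul, integral_gauss_lin _ _ hA]
      _ = K * Real.exp (-(K2 * z ^ 2) / 2 - L * z) := by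
          rw [hKdef, mul_left_comm, ← Real.exp_add, mul_assoc, ← Real.exp_add]
          congr 1
          rw [hK2def, hLdef]
          field_simp
          ring
  have hipos : ∀ p : ℝ × ℝ, 0 ≤ Real.exp (-(p.1 ^ 2 + p.2 ^ 2) / 2) / f p.1 p.2 := by
    intro p
    rw [hpt]
    positivity
  have hcont : Continuous (fun p : ℝ × ℝ => Real.exp (-(p.1 ^ 2 + p.2 ^ 2) / 2) / f p.1 p.2) := by
    have : (fun p : ℝ × ℝ => Real.exp (-(p.1 ^ 2 + p.2 ^ 2) / 2) / f p.1 p.2)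
        = fun p : ℝ × ℝ => Real.exp (-(p.1 ^ 2) / 2 - β₀ - β₁ * p.1 - β₁₁ / 2 * p.1 ^ 2) *
          Real.exp (-(A * p.2 ^ 2) / 2 - (β₂ + β₁₂ * p.1) * p.2) := funext fun p => hpt p.1 p.2
    rw [this]
    fun_prop
  have hInt : Integrable (fun p : ℝ × ℝ => Real.exp (-(p.1 ^ 2 + p.2 ^ 2) / 2) / f p.1 p.2) := by
    rw [MeasureTheory.Measure.volume_eq_prod]
    refine (MeasureTheory.integrable_prod_iff hcont.aestronglyMeasurable).2 ⟨?_, ?_⟩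
    · refine ae_of_all _ fun x => ?_
      simp only [hpt]
      exact (integrable_gauss_lin _ _ hA).const_mul _
    · have heq : (fun x : ℝ => ∫ y : ℝ, ‖Real.exp (-(x ^ 2 + y ^ 2) / 2) / f x y‖)
          = fun x : ℝ => K * Real.exp (-(K2 * x ^ 2) / 2 - L * x) := by
        funext x
        rw [← hinner x]
        congr 1
        funext y
        exact Real.norm_of_nonneg (hipos (x, y))
      rw [heq]
      exact (integrable_gauss_lin _ _ hK2).const_mul _
  have hq₀' : q₀ = (2 * π)⁻¹ * (K * (Real.sqrt (2 * π / K2) * Real.exp (L ^ 2 / (2 * K2)))) := by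
    rw [hq₀]
    congr 1
    calc (∫ p : ℝ × ℝ, Real.exp (-(p.1 ^ 2 + p.2 ^ 2) / 2) / f p.1 p.2)
        = ∫ x : ℝ, ∫ y : ℝ, Real.exp (-(x ^ 2 + y ^ 2) / 2) / f x y := by
          rw [MeasureTheory.Measure.volume_eq_prod] at hInt ⊢
          exact MeasureTheory.integral_prod _ hInt
      _ = ∫ x : ℝ, K * Real.exp (-(K2 * x ^ 2) / 2 - L * x) := by simp only [hinner]
      _ = K * (Real.sqrt (2 * π / K2) * Real.exp (L ^ 2 / (2 * K2))) := by
          rw [MeasureTheory.integral_const_mul, integral_gauss_lin _ _ hK2]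
  intro z
  rw [hinner z, hq₀', ← mul_assoc]
  have hS : (0 : ℝ) < Real.sqrt (2 * π / K2) := Real.sqrt_pos.mpr (by positivity)
  have h2πσ : 2 * π * σ2 = 2 * π / K2 := by rw [hσ2, hK2def, hAdef]; ring
  rw [h2πσ]
  rw [show (2 * π * ((2 * π)⁻¹ * (K * (Real.sqrt (2 * π / K2) * Real.exp (L ^ 2 / (2 * K2))))))⁻¹
        * K * Real.exp (-(K2 * z ^ 2) / 2 - L * z)
      = (Real.sqrt (2 * π / K2))⁻¹ *
        ((Real.exp (L ^ 2 / (2 * K2)))⁻¹ * Real.exp (-(K2 * z ^ 2) / 2 - L * z)) from by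
    field_simp [hKpos.ne', hS.ne', Real.exp_ne_zero, Real.pi_ne_zero]]
  rw [← Real.exp_neg, ← Real.exp_add]
  congr 1
  rw [hm, hσ2, hLdef]
  field_simp
  ring
end

section
/- Let β₀,β₁,β₂,β₁₁,β₁₂,β₂₂ ∈ ℝ and f(y,ẏ) = exp(β₀ + β₁y + β₂ẏ + (β₁₁/2)y² + β₁₂yẏ + (β₂₂/2)ẏ²). Then (2π)⁻¹ ∬_{ℝ²} v · log|v·f(u,v)| · exp(−(u²+v²)/2) du dv = β₂. Equivalently, for independent standard normal variables U₁, U₂, E[U₂ log|U₂ f(U₁,U₂)|] = β₂, which is the moment identity q₀·E'[Ż_t log|Ż_t|] = β₂ in the quadratic exponential model. -/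
open MeasureTheory Real


lemma odd_int {f : ℝ → ℝ} (h : ∀ x, f (-x) = - f x) : ∫ x, f x = 0 := by
  have h1 : (∫ x, f (-x)) = ∫ x, f x := integral_neg_eq_self f volume
  have h2 : (∫ x, f (-x)) = - ∫ x, f x := by simp_rw [h]; exact integral_neg f
  linarith

lemma e_eq (x : ℝ) : Real.exp (-x^2/2) = Real.exp (-(1/2 : ℝ) * x^2) := by ring_nf

lemma int_e : Integrable fun x : ℝ => Real.exp (-x^2/2) := by
  simp_rw [e_eq]; exact integrable_exp_neg_mul_sq (by norm_num)

lemma int_pow (n : ℕ) : Integrable fun x : ℝ => x^n * Real.exp (-x^2/2) := by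
  have h : (-1 : ℝ) < n := by
    have : (0:ℝ) ≤ n := Nat.cast_nonneg n
    linarith
  have := integrable_rpow_mul_exp_neg_mul_sq (b := 1/2) (by norm_num) (s := n) h
  simp_rw [Real.rpow_natCast, ← e_eq] at this
  exact this

lemma gauss0 : (∫ x : ℝ, Real.exp (-x^2/2)) = Real.sqrt (2*π) := by
  simp_rw [e_eq]
  rw [integral_gaussian]
  congr 1
  ring

lemma gauss2 : (∫ x : ℝ, x^2 * Real.exp (-x^2/2)) = Real.sqrt (2*π) := by
  have habs := integral_comp_abs (f := fun x : ℝ => x^2 * Real.exp (-x^2/2))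
  simp only [sq_abs] at habs
  rw [habs]
  have h1 : (∫ x in Set.Ioi (0:ℝ), x^2 * Real.exp (-x^2/2))
      = ∫ x in Set.Ioi (0:ℝ), x ^ (2:ℝ) * Real.exp (-(1/2) * x ^ (2:ℝ)) := by
    refine setIntegral_congr_fun measurableSet_Ioi (fun x _ => ?_)
    rw [Real.rpow_two]
    ring_nf
  rw [h1, integral_rpow_mul_exp_neg_mul_rpow (by norm_num) (by norm_num) (by norm_num)]
  have hG : Real.Gamma ((2 + 1) / 2) = Real.sqrt π / 2 := by
    have : ((2:ℝ) + 1) / 2 = 1/2 + 1 := by norm_num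
    rw [this, Real.Gamma_add_one (by norm_num), Real.Gamma_one_half_eq]
    ring
  have hb : ((1:ℝ)/2) ^ (-((2:ℝ) + 1) / 2) = 2 * Real.sqrt 2 := by
    rw [show ((1:ℝ)/2) = 2⁻¹ by norm_num, Real.inv_rpow (by norm_num),
      ← Real.rpow_neg (by norm_num), show (-(-((2:ℝ) + 1) / 2)) = 1 + 1/2 by norm_num,
      Real.rpow_add (by norm_num), Real.rpow_one, ← Real.sqrt_eq_rpow]
  rw [hG, hb]
  rw [show Real.sqrt (2*π) = Real.sqrt 2 * Real.sqrt π from Real.sqrt_mul (by norm_num) π]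
  ring_nf

lemma xlog_bound (x : ℝ) : |x * Real.log (|x|)| ≤ x^2 + 1 := by
  rcases eq_or_ne x 0 with rfl | hx
  · simp
  have ht : 0 < |x| := abs_pos.2 hx
  have key : |x| * |Real.log (|x|)| ≤ x^2 + 1 := by
    rcases le_or_gt |x| 1 with h1 | h1
    · have hlog : |Real.log (|x|)| = Real.log |x|⁻¹ := by
        rw [abs_of_nonpos (Real.log_nonpos ht.le h1), Real.log_inv]
      have h2 : Real.log |x|⁻¹ ≤ |x|⁻¹ - 1 := Real.log_le_sub_one_of_pos (by positivity)
      have h3 : |x| * Real.log |x|⁻¹ ≤ |x| * (|x|⁻¹ - 1) :=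
        mul_le_mul_of_nonneg_left h2 ht.le
      have h4 : |x| * (|x|⁻¹ - 1) = 1 - |x| := by field_simp
      nlinarith [sq_nonneg x, abs_nonneg x]
    · have hlog : |Real.log (|x|)| = Real.log |x| := abs_of_nonneg (Real.log_nonneg h1.le)
      have h2 : Real.log |x| ≤ |x| - 1 := Real.log_le_sub_one_of_pos ht
      have h5 : |x| * |x| = x^2 := by rw [← sq_abs]; ring
      nlinarith [ht]
  calc |x * Real.log (|x|)| = |x| * |Real.log (|x|)| := abs_mul _ _
    _ ≤ x^2 + 1 := key

lemma int_xlog : Integrable fun x : ℝ => x * Real.log |x| * Real.exp (-x^2/2) := by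
  refine Integrable.mono' ((int_pow 2).add int_e) ?_ (Filter.Eventually.of_forall fun x => ?_)
  · exact ((measurable_id.mul (Real.measurable_log.comp measurable_abs)).mul
      (Real.measurable_exp.comp ((measurable_id.pow_const 2).neg.div_const 2))).aestronglyMeasurable
  · have h1 : ‖x * Real.log |x| * Real.exp (-x^2/2)‖
        = |x * Real.log (|x|)| * Real.exp (-x^2/2) := by
      rw [Real.norm_eq_abs, abs_mul, abs_of_pos (Real.exp_pos _)]
    rw [h1]
    have := mul_le_mul_of_nonneg_right (xlog_bound x) (Real.exp_pos (-x^2/2)).le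
    calc |x * Real.log (|x|)| * Real.exp (-x^2/2) ≤ (x^2+1) * Real.exp (-x^2/2) := this
      _ = x^2 * Real.exp (-x^2/2) + Real.exp (-x^2/2) := by ring

lemma odd_xlog : (∫ x : ℝ, x * Real.log |x| * Real.exp (-x^2/2)) = 0 :=
  odd_int (fun x => by simp only [abs_neg, neg_sq]; ring)

lemma odd1 : (∫ x : ℝ, x * Real.exp (-x^2/2)) = 0 :=
  odd_int (fun x => by simp only [neg_sq]; ring)

lemma odd3 : (∫ x : ℝ, x^3 * Real.exp (-x^2/2)) = 0 :=
  odd_int (fun x => by simp only [neg_sq]; ring)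

/-- In the quadratic exponential model,
`(2π)⁻¹ ∬ v·log|v·f(u,v)|·exp(−(u²+v²)/2) du dv = β₂`, i.e. for independent standard
normals `U₁, U₂`, `E[U₂ log|U₂ f(U₁,U₂)|] = β₂` (the moment identity
`q₀·E'[Ż_t log|Ż_t|] = β₂`). -/
theorem stmt8 (β₀ β₁ β₂ β₁₁ β₁₂ β₂₂ : ℝ)
    (f : ℝ → ℝ → ℝ)
    (hf : ∀ y ydot : ℝ, f y ydot =
      Real.exp (β₀ + β₁ * y + β₂ * ydot + β₁₁ / 2 * y ^ 2 + β₁₂ * y * ydot + β₂₂ / 2 * ydot ^ 2)) :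
    (2 * π)⁻¹ * ∫ p : ℝ × ℝ,
        p.2 * Real.log |p.2 * f p.1 p.2| * Real.exp (-(p.1 ^ 2 + p.2 ^ 2) / 2) = β₂ := by
  have hEmul : ∀ u v : ℝ, Real.exp (-(u^2+v^2)/2) = Real.exp (-u^2/2) * Real.exp (-v^2/2) := by
    intro u v; rw [← Real.exp_add]; ring_nf
  have key : ∀ p : ℝ × ℝ,
      p.2 * Real.log |p.2 * f p.1 p.2| * Real.exp (-(p.1^2+p.2^2)/2)
      = Real.exp (-p.1^2/2) * (p.2 * Real.log (|p.2|) * Real.exp (-p.2^2/2))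
      + β₀ * (Real.exp (-p.1^2/2) * (p.2 * Real.exp (-p.2^2/2)))
      + β₁ * ((p.1 * Real.exp (-p.1^2/2)) * (p.2 * Real.exp (-p.2^2/2)))
      + β₂ * (Real.exp (-p.1^2/2) * (p.2^2 * Real.exp (-p.2^2/2)))
      + β₁₁/2 * ((p.1^2 * Real.exp (-p.1^2/2)) * (p.2 * Real.exp (-p.2^2/2)))
      + β₁₂ * ((p.1 * Real.exp (-p.1^2/2)) * (p.2^2 * Real.exp (-p.2^2/2)))
      + β₂₂/2 * (Real.exp (-p.1^2/2) * (p.2^3 * Real.exp (-p.2^2/2))) := by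
    rintro ⟨u, v⟩
    simp only
    rcases eq_or_ne v 0 with rfl | hv
    · simp
    · rw [hf, hEmul, abs_mul, abs_of_pos (Real.exp_pos _),
        Real.log_mul (abs_ne_zero.2 hv) (Real.exp_ne_zero _), Real.log_exp]
      ring
  have ip1 : Integrable fun x : ℝ => x * Real.exp (-x^2/2) := by simpa using int_pow 1
  have t1 : Integrable (fun p : ℝ × ℝ =>
      Real.exp (-p.1^2/2) * (p.2 * Real.log (|p.2|) * Real.exp (-p.2^2/2))) := by
    rw [Measure.volume_eq_prod]; exact int_e.mul_prod int_xlog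
  have t2 : Integrable (fun p : ℝ × ℝ =>
      β₀ * (Real.exp (-p.1^2/2) * (p.2 * Real.exp (-p.2^2/2)))) := by
    rw [Measure.volume_eq_prod]; exact (int_e.mul_prod ip1).const_mul _
  have t3 : Integrable (fun p : ℝ × ℝ =>
      β₁ * ((p.1 * Real.exp (-p.1^2/2)) * (p.2 * Real.exp (-p.2^2/2)))) := by
    rw [Measure.volume_eq_prod]; exact (ip1.mul_prod ip1).const_mul _
  have t4 : Integrable (fun p : ℝ × ℝ =>
      β₂ * (Real.exp (-p.1^2/2) * (p.2^2 * Real.exp (-p.2^2/2)))) := by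
    rw [Measure.volume_eq_prod]; exact (int_e.mul_prod (int_pow 2)).const_mul _
  have t5 : Integrable (fun p : ℝ × ℝ =>
      β₁₁/2 * ((p.1^2 * Real.exp (-p.1^2/2)) * (p.2 * Real.exp (-p.2^2/2)))) := by
    rw [Measure.volume_eq_prod]; exact ((int_pow 2).mul_prod ip1).const_mul _
  have t6 : Integrable (fun p : ℝ × ℝ =>
      β₁₂ * ((p.1 * Real.exp (-p.1^2/2)) * (p.2^2 * Real.exp (-p.2^2/2)))) := by
    rw [Measure.volume_eq_prod]; exact (ip1.mul_prod (int_pow 2)).const_mul _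
  have t7 : Integrable (fun p : ℝ × ℝ =>
      β₂₂/2 * (Real.exp (-p.1^2/2) * (p.2^3 * Real.exp (-p.2^2/2)))) := by
    rw [Measure.volume_eq_prod]; exact (int_e.mul_prod (int_pow 3)).const_mul _
  have s2 : Integrable (fun p : ℝ × ℝ => Real.exp (-p.1^2/2) * (p.2 * Real.log (|p.2|) * Real.exp (-p.2^2/2)) + β₀ * (Real.exp (-p.1^2/2) * (p.2 * Real.exp (-p.2^2/2)))) := t1.add t2
  have s3 : Integrable (fun p : ℝ × ℝ => Real.exp (-p.1^2/2) * (p.2 * Real.log (|p.2|) * Real.exp (-p.2^2/2)) + β₀ * (Real.exp (-p.1^2/2) * (p.2 * Real.exp (-p.2^2/2))) + β₁ * ((p.1 * Real.exp (-p.1^2/2)) * (p.2 * Real.exp (-p.2^2/2)))) := s2.add t3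
  have s4 : Integrable (fun p : ℝ × ℝ => Real.exp (-p.1^2/2) * (p.2 * Real.log (|p.2|) * Real.exp (-p.2^2/2)) + β₀ * (Real.exp (-p.1^2/2) * (p.2 * Real.exp (-p.2^2/2))) + β₁ * ((p.1 * Real.exp (-p.1^2/2)) * (p.2 * Real.exp (-p.2^2/2))) + β₂ * (Real.exp (-p.1^2/2) * (p.2^2 * Real.exp (-p.2^2/2)))) := s3.add t4
  have s5 : Integrable (fun p : ℝ × ℝ => Real.exp (-p.1^2/2) * (p.2 * Real.log (|p.2|) * Real.exp (-p.2^2/2)) + β₀ * (Real.exp (-p.1^2/2) * (p.2 * Real.exp (-p.2^2/2))) + β₁ * ((p.1 * Real.exp (-p.1^2/2)) * (p.2 * Real.exp (-p.2^2/2))) + β₂ * (Real.exp (-p.1^2/2) * (p.2^2 * Real.exp (-p.2^2/2))) + β₁₁/2 * ((p.1^2 * Real.exp (-p.1^2/2)) * (p.2 * Real.exp (-p.2^2/2)))) := s4.add t5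
  have s6 : Integrable (fun p : ℝ × ℝ => Real.exp (-p.1^2/2) * (p.2 * Real.log (|p.2|) * Real.exp (-p.2^2/2)) + β₀ * (Real.exp (-p.1^2/2) * (p.2 * Real.exp (-p.2^2/2))) + β₁ * ((p.1 * Real.exp (-p.1^2/2)) * (p.2 * Real.exp (-p.2^2/2))) + β₂ * (Real.exp (-p.1^2/2) * (p.2^2 * Real.exp (-p.2^2/2))) + β₁₁/2 * ((p.1^2 * Real.exp (-p.1^2/2)) * (p.2 * Real.exp (-p.2^2/2))) + β₁₂ * ((p.1 * Real.exp (-p.1^2/2)) * (p.2^2 * Real.exp (-p.2^2/2)))) := s5.add t6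
  have hrw : (∫ p : ℝ × ℝ,
      p.2 * Real.log |p.2 * f p.1 p.2| * Real.exp (-(p.1 ^ 2 + p.2 ^ 2) / 2))
      = ∫ p : ℝ × ℝ, (Real.exp (-p.1^2/2) * (p.2 * Real.log (|p.2|) * Real.exp (-p.2^2/2))
      + β₀ * (Real.exp (-p.1^2/2) * (p.2 * Real.exp (-p.2^2/2)))
      + β₁ * ((p.1 * Real.exp (-p.1^2/2)) * (p.2 * Real.exp (-p.2^2/2)))
      + β₂ * (Real.exp (-p.1^2/2) * (p.2^2 * Real.exp (-p.2^2/2)))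
      + β₁₁/2 * ((p.1^2 * Real.exp (-p.1^2/2)) * (p.2 * Real.exp (-p.2^2/2)))
      + β₁₂ * ((p.1 * Real.exp (-p.1^2/2)) * (p.2^2 * Real.exp (-p.2^2/2)))
      + β₂₂/2 * (Real.exp (-p.1^2/2) * (p.2^3 * Real.exp (-p.2^2/2)))) :=
    integral_congr_ae (Filter.Eventually.of_forall key)
  rw [hrw,
    integral_add s6 t7,
    integral_add s5 t6,
    integral_add s4 t5,
    integral_add s3 t4,
    integral_add s2 t3,
    integral_add t1 t2,
    integral_const_mul, integral_const_mul, integral_const_mul, integral_const_mul,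
    integral_const_mul, integral_const_mul, Measure.volume_eq_prod,
    integral_prod_mul (f := fun u : ℝ => Real.exp (-u^2/2))
      (g := fun v : ℝ => v * Real.log (|v|) * Real.exp (-v^2/2)),
    integral_prod_mul (f := fun u : ℝ => Real.exp (-u^2/2))
      (g := fun v : ℝ => v * Real.exp (-v^2/2)),
    integral_prod_mul (f := fun u : ℝ => u * Real.exp (-u^2/2))
      (g := fun v : ℝ => v * Real.exp (-v^2/2)),
    integral_prod_mul (f := fun u : ℝ => Real.exp (-u^2/2))
      (g := fun v : ℝ => v^2 * Real.exp (-v^2/2)),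
    integral_prod_mul (f := fun u : ℝ => u^2 * Real.exp (-u^2/2))
      (g := fun v : ℝ => v * Real.exp (-v^2/2)),
    integral_prod_mul (f := fun u : ℝ => u * Real.exp (-u^2/2))
      (g := fun v : ℝ => v^2 * Real.exp (-v^2/2)),
    integral_prod_mul (f := fun u : ℝ => Real.exp (-u^2/2))
      (g := fun v : ℝ => v^3 * Real.exp (-v^2/2)),
    gauss0, gauss2, odd_xlog, odd1, odd3]
  have hss : Real.sqrt (2*π) * Real.sqrt (2*π) = 2*π := Real.mul_self_sqrt (by positivity)
  rw [hss]
  have h2π : (2*π) ≠ 0 := by positivity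
  field_simp
  ring
end

section
/- Let β₀,β₁,β₂,β₁₁,β₁₂,β₂₂ ∈ ℝ and f(y,ẏ) = exp(β₀ + β₁y + β₂ẏ + (β₁₁/2)y² + β₁₂yẏ + (β₂₂/2)ẏ²). Then (2π)⁻¹ ∬_{ℝ²} u·v · log|v·f(u,v)| · exp(−(u²+v²)/2) du dv = β₁₂. Equivalently, for independent standard normal variables U₁, U₂, E[U₁ U₂ log|U₂ f(U₁,U₂)|] = β₁₂, which is the moment identity q₀·E'[Z_t Ż_t log|Ż_t|] = β₁₂ in the quadratic exponential model. -/
open MeasureTheory Real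


noncomputable def gg (x : ℝ) : ℝ := Real.exp (-x ^ 2 / 2)

lemma gg_pos (x : ℝ) : 0 < gg x := exp_pos _

lemma integral_odd {f : ℝ → ℝ} (h : ∀ x, f (-x) = -f x) : ∫ x, f x = 0 := by
  have h1 : ∫ x, f (-x) = ∫ x, f x := integral_neg_eq_self f volume
  simp_rw [h, integral_neg] at h1
  linarith

lemma IA : ∫ x : ℝ, x * gg x = 0 := by
  refine integral_odd fun x => ?_
  simp only [gg, neg_sq]
  ring

lemma IC : ∫ x : ℝ, x ^ 2 * gg x = Real.sqrt 2 * Real.sqrt π := by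
  have h0 : (fun x : ℝ => x ^ 2 * gg x) = fun x : ℝ => |x| ^ 2 * Real.exp (-|x| ^ 2 / 2) := by
    funext x; rw [sq_abs]; rfl
  have h1 := integral_comp_abs (f := fun y : ℝ => y ^ 2 * Real.exp (-y ^ 2 / 2))
  rw [h0, h1]
  have h2 := integral_rpow_mul_exp_neg_mul_rpow (p := 2) (q := 2) (b := 1/2) two_pos
    (by norm_num) (by norm_num)
  simp_rw [Real.rpow_two] at h2
  have h3 : ∀ x : ℝ, -(1/2 : ℝ) * x ^ 2 = -x ^ 2 / 2 := fun x => by ring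
  simp_rw [h3] at h2
  rw [h2]
  have e2 : ((2 : ℝ) + 1) / 2 = 1/2 + 1 := by norm_num
  rw [e2, Real.Gamma_add_one (by norm_num), Real.Gamma_one_half_eq]
  have e3 : ((1 : ℝ)/2) ^ (-((2 : ℝ) + 1) / 2 : ℝ) = 2 * Real.sqrt 2 := by
    rw [show (-((2 : ℝ) + 1) / 2 : ℝ) = -(3/2) by norm_num,
      Real.rpow_neg (by norm_num), show ((1 : ℝ)/2) = 2⁻¹ by norm_num,
      Real.inv_rpow (by norm_num), inv_inv,
      show (3/2 : ℝ) = 1 + 1/2 by norm_num, Real.rpow_add (by norm_num), Real.rpow_one,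
      ← Real.sqrt_eq_rpow]
  rw [e3]
  ring



lemma gg_eq (x : ℝ) : gg x = Real.exp (-(1/2 : ℝ) * x ^ 2) := by
  rw [gg]; congr 1; ring

lemma intg0 : Integrable (fun x : ℝ => gg x) := by
  simp_rw [gg_eq]; exact integrable_exp_neg_mul_sq (by norm_num)

lemma intg1 : Integrable (fun x : ℝ => x * gg x) := by
  simp_rw [gg_eq]; exact integrable_mul_exp_neg_mul_sq (by norm_num)

lemma quarter_int : Integrable (fun x : ℝ => Real.exp (-(1/4 : ℝ) * x ^ 2)) :=
  integrable_exp_neg_mul_sq (by norm_num)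

lemma gg_nonneg (x : ℝ) : 0 ≤ gg x := (Real.exp_pos _).le

lemma intg2 : Integrable (fun x : ℝ => x ^ 2 * gg x) := by
  refine Integrable.mono' (quarter_int.const_mul 4) ?_ (ae_of_all _ fun x => ?_)
  · apply Measurable.aestronglyMeasurable
    exact (measurable_id.pow_const 2).mul ((measurable_id.pow_const 2).neg.div_const 2).exp
  · have hb : x ^ 2 / 4 + 1 ≤ Real.exp (x ^ 2 / 4) := add_one_le_exp _
    have h1 : Real.exp (x ^ 2 / 4) * Real.exp (-(1/4 : ℝ) * x ^ 2) = 1 := by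
      rw [← Real.exp_add, show x ^ 2 / 4 + -(1/4 : ℝ) * x ^ 2 = 0 by ring, Real.exp_zero]
    have h2 : gg x = Real.exp (-(1/4 : ℝ) * x ^ 2) * Real.exp (-(1/4 : ℝ) * x ^ 2) := by
      rw [gg, ← Real.exp_add]; congr 1; ring
    have ha := Real.exp_pos (-(1/4 : ℝ) * x ^ 2)
    rw [Real.norm_eq_abs, abs_of_nonneg (mul_nonneg (sq_nonneg x) (gg_nonneg x)), h2]
    have hx : x ^ 2 ≤ 4 * Real.exp (x ^ 2 / 4) := by linarith [hb]
    calc x ^ 2 * (Real.exp (-(1/4 : ℝ) * x ^ 2) * Real.exp (-(1/4 : ℝ) * x ^ 2))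
        ≤ 4 * Real.exp (x ^ 2 / 4) *
            (Real.exp (-(1/4 : ℝ) * x ^ 2) * Real.exp (-(1/4 : ℝ) * x ^ 2)) :=
          mul_le_mul_of_nonneg_right hx (mul_nonneg ha.le ha.le)
      _ = 4 * (Real.exp (x ^ 2 / 4) * Real.exp (-(1/4 : ℝ) * x ^ 2)) *
            Real.exp (-(1/4 : ℝ) * x ^ 2) := by ring
      _ = 4 * Real.exp (-(1/4 : ℝ) * x ^ 2) := by rw [h1]; ring

lemma intg3 : Integrable (fun x : ℝ => x ^ 3 * gg x) := by
  refine Integrable.mono' (quarter_int.const_mul 65) ?_ (ae_of_all _ fun x => ?_)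
  · apply Measurable.aestronglyMeasurable
    exact (measurable_id.pow_const 3).mul ((measurable_id.pow_const 2).neg.div_const 2).exp
  · set t := |x| with ht
    have ht0 : 0 ≤ t := abs_nonneg x
    have ht2 : t ^ 2 = x ^ 2 := sq_abs x
    set a := Real.exp (-(1/4 : ℝ) * x ^ 2) with ha
    set c := Real.exp (x ^ 2 / 8) with hc
    have hapos : 0 < a := Real.exp_pos _
    have hcpos : 0 < c := Real.exp_pos _
    have hac : a * c * c = 1 := by
      rw [ha, hc, ← Real.exp_add, ← Real.exp_add,
        show -(1/4 : ℝ) * x ^ 2 + x ^ 2 / 8 + x ^ 2 / 8 = 0 by ring, Real.exp_zero]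
    have hcb : x ^ 2 / 8 + 1 ≤ c := add_one_le_exp _
    have h2 : gg x = a * a := by
      rw [gg, ha, ← Real.exp_add]; congr 1; ring
    have htt : t ^ 3 ≤ t ^ 4 + 1 := by nlinarith [sq_nonneg (t ^ 2 - t), sq_nonneg (t - 1)]
    have hx4 : t ^ 4 ≤ 64 * (c * c) := by nlinarith [sq_nonneg x, mul_pos hcpos hcpos]
    have ha1 : a ≤ 1 := by
      rw [ha]; apply Real.exp_le_one_iff.mpr; nlinarith [sq_nonneg x]
    have key : t ^ 3 * a ≤ 65 := by
      have h64 : t ^ 4 * a ≤ 64 := by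
        calc t ^ 4 * a ≤ 64 * (c * c) * a := by nlinarith
          _ = 64 * (a * c * c) := by ring
          _ = 64 := by rw [hac]; norm_num
      nlinarith [mul_le_mul_of_nonneg_right htt hapos.le]
    rw [Real.norm_eq_abs, abs_mul, abs_of_nonneg (gg_nonneg x), abs_pow, ← ht, h2]
    nlinarith [mul_le_mul_of_nonneg_right key hapos.le]

lemma abs_mul_log_abs_le (x : ℝ) : abs (x * Real.log (abs x)) ≤ x ^ 2 + 1 := by
  rcases eq_or_ne x 0 with rfl | hx
  · simp
  · have ht0 : 0 < |x| := abs_pos.mpr hx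
    have ht2 : |x| ^ 2 = x ^ 2 := sq_abs x
    rw [abs_mul]
    rcases le_total 1 |x| with h1 | h1
    · have hl0 : 0 ≤ Real.log |x| := Real.log_nonneg h1
      rw [abs_of_nonneg hl0]
      have := Real.log_le_sub_one_of_pos ht0
      nlinarith
    · have hl0 : Real.log |x| ≤ 0 := Real.log_nonpos (abs_nonneg x) h1
      rw [abs_of_nonpos hl0]
      have hinv : Real.log |x|⁻¹ ≤ |x|⁻¹ - 1 := Real.log_le_sub_one_of_pos (by positivity)
      rw [Real.log_inv] at hinv
      have h3 : |x| * -Real.log |x| ≤ |x| * (|x|⁻¹ - 1) :=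
        mul_le_mul_of_nonneg_left (by linarith) ht0.le
      have hinvmul : |x| * |x|⁻¹ = 1 := mul_inv_cancel₀ (ne_of_gt ht0)
      have h4 : |x| * (|x|⁻¹ - 1) = 1 - |x| := by rw [mul_sub, hinvmul, mul_one]
      have h5 : |x| * -Real.log |x| ≤ 1 - |x| := h4 ▸ h3
      nlinarith [sq_nonneg x, ht0.le, h5]

lemma intgLog : Integrable (fun x : ℝ => x * Real.log (abs x) * gg x) := by
  have hmeas : Measurable fun x : ℝ => x * Real.log (abs x) * gg x :=
    (measurable_id.mul (Real.measurable_log.comp measurable_abs)).mul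
      ((measurable_id.pow_const 2).neg.div_const 2).exp
  refine Integrable.mono' (intg2.add intg0) hmeas.aestronglyMeasurable
    (ae_of_all _ fun x => ?_)
  rw [Real.norm_eq_abs, abs_mul, abs_of_nonneg (gg_nonneg x)]
  calc abs (x * Real.log (abs x)) * gg x ≤ (x ^ 2 + 1) * gg x :=
        mul_le_mul_of_nonneg_right (abs_mul_log_abs_le x) (gg_nonneg x)
    _ = x ^ 2 * gg x + gg x := by ring











lemma int_prod (φ ψ : ℝ → ℝ) : ∫ p : ℝ × ℝ, φ p.1 * ψ p.2 = (∫ x, φ x) * ∫ y, ψ y := by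
  rw [Measure.volume_eq_prod]
  exact integral_prod_mul φ ψ

lemma intble_prod {φ ψ : ℝ → ℝ} (hφ : Integrable φ) (hψ : Integrable ψ) :
    Integrable (fun p : ℝ × ℝ => φ p.1 * ψ p.2) := by
  rw [Measure.volume_eq_prod]
  exact hφ.mul_prod hψ


/-- In the quadratic exponential model,
`(2π)⁻¹ ∬ u·v·log|v·f(u,v)|·exp(−(u²+v²)/2) du dv = β₁₂`, i.e. for independent standard
normals `U₁, U₂`, `E[U₁U₂ log|U₂ f(U₁,U₂)|] = β₁₂` (the moment identity
`q₀·E'[Z_t Ż_t log|Ż_t|] = β₁₂`). -/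
theorem stmt9 (β₀ β₁ β₂ β₁₁ β₁₂ β₂₂ : ℝ)
    (f : ℝ → ℝ → ℝ)
    (hf : ∀ y ydot : ℝ, f y ydot =
      Real.exp (β₀ + β₁ * y + β₂ * ydot + β₁₁ / 2 * y ^ 2 + β₁₂ * y * ydot + β₂₂ / 2 * ydot ^ 2)) :
    (2 * π)⁻¹ * ∫ p : ℝ × ℝ,
        p.1 * p.2 * Real.log |p.2 * f p.1 p.2| * Real.exp (-(p.1 ^ 2 + p.2 ^ 2) / 2) = β₁₂ := by
  have hpt : ∀ p : ℝ × ℝ,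
      p.1 * p.2 * Real.log |p.2 * f p.1 p.2| * Real.exp (-(p.1 ^ 2 + p.2 ^ 2) / 2) =
      (p.1 * gg p.1) * (p.2 * Real.log (abs p.2) * gg p.2)
      + (β₀ * (p.1 * gg p.1)) * (p.2 * gg p.2)
      + (β₁ * (p.1 ^ 2 * gg p.1)) * (p.2 * gg p.2)
      + (β₂ * (p.1 * gg p.1)) * (p.2 ^ 2 * gg p.2)
      + (β₁₁ / 2 * (p.1 ^ 3 * gg p.1)) * (p.2 * gg p.2)
      + (β₁₂ * (p.1 ^ 2 * gg p.1)) * (p.2 ^ 2 * gg p.2)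
      + (β₂₂ / 2 * (p.1 * gg p.1)) * (p.2 ^ 3 * gg p.2) := by
    rintro ⟨u, v⟩
    simp only
    have hexp : Real.exp (-(u ^ 2 + v ^ 2) / 2) = gg u * gg v := by
      rw [gg, gg, ← Real.exp_add]; congr 1; ring
    rcases eq_or_ne v 0 with rfl | hv
    · simp [gg]
    · rw [hf u v, abs_mul, abs_of_pos (Real.exp_pos _),
        Real.log_mul (abs_ne_zero.mpr hv) (Real.exp_ne_zero _), Real.log_exp, hexp, gg, gg]
      ring
  have h := integral_congr_ae (ae_of_all volume fun p => hpt p)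
  rw [h]
  have hI1 : Integrable (fun p : ℝ × ℝ =>
      (p.1 * gg p.1) * (p.2 * Real.log (abs p.2) * gg p.2)) := intble_prod intg1 intgLog
  have hI2 : Integrable (fun p : ℝ × ℝ =>
      (β₀ * (p.1 * gg p.1)) * (p.2 * gg p.2)) := intble_prod (intg1.const_mul β₀) intg1
  have hI3 : Integrable (fun p : ℝ × ℝ =>
      (β₁ * (p.1 ^ 2 * gg p.1)) * (p.2 * gg p.2)) := intble_prod (intg2.const_mul β₁) intg1
  have hI4 : Integrable (fun p : ℝ × ℝ =>
      (β₂ * (p.1 * gg p.1)) * (p.2 ^ 2 * gg p.2)) := intble_prod (intg1.const_mul β₂) intg2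
  have hI5 : Integrable (fun p : ℝ × ℝ =>
      (β₁₁ / 2 * (p.1 ^ 3 * gg p.1)) * (p.2 * gg p.2)) :=
    intble_prod (intg3.const_mul (β₁₁ / 2)) intg1
  have hI6 : Integrable (fun p : ℝ × ℝ =>
      (β₁₂ * (p.1 ^ 2 * gg p.1)) * (p.2 ^ 2 * gg p.2)) :=
    intble_prod (intg2.const_mul β₁₂) intg2
  have hI7 : Integrable (fun p : ℝ × ℝ =>
      (β₂₂ / 2 * (p.1 * gg p.1)) * (p.2 ^ 3 * gg p.2)) :=
    intble_prod (intg1.const_mul (β₂₂ / 2)) intg3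
  have hS2 : Integrable (fun p : ℝ × ℝ => (p.1 * gg p.1) * (p.2 * Real.log (abs p.2) * gg p.2) + (β₀ * (p.1 * gg p.1)) * (p.2 * gg p.2)) := (hI1.add hI2)
  have hS3 : Integrable (fun p : ℝ × ℝ => (p.1 * gg p.1) * (p.2 * Real.log (abs p.2) * gg p.2) + (β₀ * (p.1 * gg p.1)) * (p.2 * gg p.2) + (β₁ * (p.1 ^ 2 * gg p.1)) * (p.2 * gg p.2)) := ((hI1.add hI2).add hI3)
  have hS4 : Integrable (fun p : ℝ × ℝ => (p.1 * gg p.1) * (p.2 * Real.log (abs p.2) * gg p.2) + (β₀ * (p.1 * gg p.1)) * (p.2 * gg p.2) + (β₁ * (p.1 ^ 2 * gg p.1)) * (p.2 * gg p.2) + (β₂ * (p.1 * gg p.1)) * (p.2 ^ 2 * gg p.2)) := (((hI1.add hI2).add hI3).add hI4)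
  have hS5 : Integrable (fun p : ℝ × ℝ => (p.1 * gg p.1) * (p.2 * Real.log (abs p.2) * gg p.2) + (β₀ * (p.1 * gg p.1)) * (p.2 * gg p.2) + (β₁ * (p.1 ^ 2 * gg p.1)) * (p.2 * gg p.2) + (β₂ * (p.1 * gg p.1)) * (p.2 ^ 2 * gg p.2) + (β₁₁ / 2 * (p.1 ^ 3 * gg p.1)) * (p.2 * gg p.2)) := ((((hI1.add hI2).add hI3).add hI4).add hI5)
  have hS6 : Integrable (fun p : ℝ × ℝ => (p.1 * gg p.1) * (p.2 * Real.log (abs p.2) * gg p.2) + (β₀ * (p.1 * gg p.1)) * (p.2 * gg p.2) + (β₁ * (p.1 ^ 2 * gg p.1)) * (p.2 * gg p.2) + (β₂ * (p.1 * gg p.1)) * (p.2 ^ 2 * gg p.2) + (β₁₁ / 2 * (p.1 ^ 3 * gg p.1)) * (p.2 * gg p.2) + (β₁₂ * (p.1 ^ 2 * gg p.1)) * (p.2 ^ 2 * gg p.2)) := (((((hI1.add hI2).add hI3).add hI4).add hI5).add hI6)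
  rw [integral_add hS6 hI7, integral_add hS5 hI6, integral_add hS4 hI5,
    integral_add hS3 hI4, integral_add hS2 hI3, integral_add hI1 hI2]
  rw [int_prod (fun x : ℝ => x * gg x) (fun y : ℝ => y * Real.log (abs y) * gg y),
    int_prod (fun x : ℝ => β₀ * (x * gg x)) (fun y : ℝ => y * gg y),
    int_prod (fun x : ℝ => β₁ * (x ^ 2 * gg x)) (fun y : ℝ => y * gg y),
    int_prod (fun x : ℝ => β₂ * (x * gg x)) (fun y : ℝ => y ^ 2 * gg y),
    int_prod (fun x : ℝ => β₁₁ / 2 * (x ^ 3 * gg x)) (fun y : ℝ => y * gg y),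
    int_prod (fun x : ℝ => β₁₂ * (x ^ 2 * gg x)) (fun y : ℝ => y ^ 2 * gg y),
    int_prod (fun x : ℝ => β₂₂ / 2 * (x * gg x)) (fun y : ℝ => y ^ 3 * gg y),
    integral_const_mul, integral_const_mul, integral_const_mul, integral_const_mul,
    integral_const_mul, integral_const_mul, IA, IC]
  have h2 : Real.sqrt 2 * Real.sqrt π * (Real.sqrt 2 * Real.sqrt π) = 2 * π := by
    rw [show Real.sqrt 2 * Real.sqrt π * (Real.sqrt 2 * Real.sqrt π)
        = (Real.sqrt 2 * Real.sqrt 2) * (Real.sqrt π * Real.sqrt π) by ring,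
      Real.mul_self_sqrt (by norm_num), Real.mul_self_sqrt Real.pi_pos.le]
  field_simp
  linear_combination 2 * β₁₂ * h2
end

section
/- Let β₀,β₁,β₂,β₁₁,β₁₂,β₂₂ ∈ ℝ and f(y,ẏ) = exp(β₀ + β₁y + β₂ẏ + (β₁₁/2)y² + β₁₂yẏ + (β₂₂/2)ẏ²). Then (2π)⁻¹ ∬_{ℝ²} u·|v| · log|v·f(u,v)| · exp(−(u²+v²)/2) du dv = β₁·√(2/π). Equivalently, for independent standard normals U₁, U₂, E[U₁ |U₂| log|U₂ f(U₁,U₂)|] = β₁√(2/π), which is the moment identity q₀·E'[Z_t |Ż_t| log|Ż_t|] = β₁√(2/π) in the quadratic exponential model. -/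
open MeasureTheory Real

noncomputable def Eg : ℝ → ℝ := fun x => Real.exp (-(1/2) * x ^ 2)

lemma Eg_pos (x : ℝ) : 0 < Eg x := Real.exp_pos _

lemma Eg_abs (x : ℝ) : Eg |x| = Eg x := by simp [Eg, sq_abs]

lemma measurable_Eg : Measurable Eg :=
  (((measurable_id.pow_const 2).const_mul _).exp)

lemma integral_odd_s11 {g : ℝ → ℝ} (hg : ∀ x, g (-x) = - g x) : ∫ x, g x = 0 := by
  have h := MeasureTheory.integral_neg_eq_self g (volume : Measure ℝ)
  simp_rw [hg, integral_neg] at h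
  linarith

lemma ig0 : Integrable Eg := integrable_exp_neg_mul_sq (by norm_num : (0:ℝ) < 1/2)

lemma ig1 : Integrable (fun x : ℝ => x * Eg x) :=
  integrable_mul_exp_neg_mul_sq (by norm_num : (0:ℝ) < 1/2)

lemma igpow (n : ℕ) : Integrable (fun x : ℝ => x ^ n * Eg x) := by
  have := integrable_rpow_mul_exp_neg_mul_sq (by norm_num : (0:ℝ) < 1/2) (s := n)
    (by exact_mod_cast neg_one_lt_zero.trans_le (Nat.cast_nonneg n))
  simpa [Eg, Real.rpow_natCast] using this

lemma igabs : Integrable (fun x : ℝ => |x| * Eg x) := by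
  refine ig1.abs.congr (Filter.Eventually.of_forall fun x => ?_)
  simp only [abs_mul, abs_of_pos (Eg_pos x)]

lemma igvabs : Integrable (fun x : ℝ => x * |x| * Eg x) := by
  refine (igpow 2).abs.mono' ?_ (Filter.Eventually.of_forall fun x => ?_)
  · exact ((measurable_id.mul measurable_abs).mul measurable_Eg).aestronglyMeasurable
  · rw [Real.norm_eq_abs, abs_mul, abs_of_pos (Eg_pos x), abs_mul, abs_abs]
    exact le_of_eq (by rw [abs_mul, abs_of_pos (Eg_pos x), abs_pow, pow_two])

lemma igv2abs : Integrable (fun x : ℝ => x ^ 2 * |x| * Eg x) := by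
  refine (igpow 3).abs.mono' ?_ (Filter.Eventually.of_forall fun x => ?_)
  · exact (((measurable_id.pow_const 2).mul measurable_abs).mul
      measurable_Eg).aestronglyMeasurable
  · rw [Real.norm_eq_abs, abs_mul, abs_of_pos (Eg_pos x), abs_mul, abs_abs]
    exact le_of_eq (by rw [abs_mul, abs_of_pos (Eg_pos x), abs_pow, abs_pow]; ring)

lemma abs_mul_log_le (t : ℝ) (ht : 0 ≤ t) : t * |Real.log t| ≤ 1 + t ^ 2 := by
  rcases eq_or_lt_of_le ht with h | h
  · simp [← h]
  rcases le_or_gt t 1 with h1 | h1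
  · have hlog : Real.log t ≤ 0 := Real.log_nonpos ht h1
    have : |Real.log t| = - Real.log t := abs_of_nonpos hlog
    rw [this]
    have h2 : Real.log t⁻¹ ≤ t⁻¹ - 1 := Real.log_le_sub_one_of_pos (by positivity)
    rw [Real.log_inv] at h2
    have : t * (- Real.log t) ≤ t * (t⁻¹ - 1) :=
      mul_le_mul_of_nonneg_left (by linarith) ht
    have ht' : t * (t⁻¹ - 1) = 1 - t := by field_simp
    nlinarith [sq_nonneg t]
  · have hlog : 0 ≤ Real.log t := Real.log_nonneg h1.le
    rw [abs_of_nonneg hlog]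
    have h2 : Real.log t ≤ t - 1 := Real.log_le_sub_one_of_pos h
    nlinarith

lemma iglog : Integrable (fun x : ℝ => |x| * Real.log |x| * Eg x) := by
  have hg : Integrable (fun x : ℝ => (1 + x ^ 2) * Eg x) := by
    refine (ig0.add (igpow 2)).congr (Filter.Eventually.of_forall fun x => ?_)
    simp only [Pi.add_apply]; ring
  refine hg.mono' ?_ (Filter.Eventually.of_forall fun x => ?_)
  · exact ((measurable_abs.mul (Real.measurable_log.comp measurable_abs)).mul
      measurable_Eg).aestronglyMeasurable
  · rw [Real.norm_eq_abs, abs_mul, abs_of_pos (Eg_pos x), abs_mul, abs_abs]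
    refine mul_le_mul_of_nonneg_right ?_ (Eg_pos x).le
    have := abs_mul_log_le |x| (abs_nonneg x)
    rwa [sq_abs] at this

lemma int_odd1 : ∫ x : ℝ, x * Eg x = 0 :=
  integral_odd_s11 fun x => by simp only [Eg, neg_sq]; ring

lemma int_odd3 : ∫ x : ℝ, x ^ 3 * Eg x = 0 :=
  integral_odd_s11 fun x => by simp only [Eg, neg_sq]; ring

lemma int_oddvabs : ∫ x : ℝ, x * |x| * Eg x = 0 :=
  integral_odd_s11 fun x => by simp only [Eg, neg_sq, abs_neg]; ring

lemma rpow_two_eq (x : ℝ) : x ^ (2:ℝ) = x ^ (2:ℕ) := by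
  rw [← Real.rpow_natCast x 2]; norm_num

lemma int_abs : ∫ x : ℝ, |x| * Eg x = 2 := by
  have h1 : (fun x : ℝ => |x| * Eg x) = fun x => (fun y => y * Eg y) |x| := by
    funext x; simp [Eg_abs]
  rw [h1, integral_comp_abs (f := fun y => y * Eg y)]
  have key : ∫ x in Set.Ioi (0:ℝ), x ^ (1:ℝ) * Real.exp (-(1/2) * x ^ (2:ℝ)) =
      ((1:ℝ)/2) ^ (-((1:ℝ) + 1)/2) * (1/2) * Real.Gamma (((1:ℝ) + 1)/2) :=
    integral_rpow_mul_exp_neg_mul_rpow two_pos (by norm_num) (by norm_num)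
  have e1 : ∀ x ∈ Set.Ioi (0:ℝ), x ^ (1:ℝ) * Real.exp (-(1/2) * x ^ (2:ℝ)) = x * Eg x := by
    intro x _
    rw [Real.rpow_one, rpow_two_eq, Eg]
  rw [setIntegral_congr_fun measurableSet_Ioi e1] at key
  rw [key, show -((1:ℝ) + 1)/2 = -1 by norm_num, Real.rpow_neg_one,
    show ((1:ℝ) + 1)/2 = 1 by norm_num, Real.Gamma_one]
  norm_num

lemma int_sq : ∫ x : ℝ, x ^ 2 * Eg x = Real.sqrt (2 * π) := by
  have h1 : (fun x : ℝ => x ^ 2 * Eg x) = fun x => (fun y => y ^ 2 * Eg y) |x| := by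
    funext x; simp [Eg_abs, sq_abs]
  rw [h1, integral_comp_abs (f := fun y => y ^ 2 * Eg y)]
  have key : ∫ x in Set.Ioi (0:ℝ), x ^ (2:ℝ) * Real.exp (-(1/2) * x ^ (2:ℝ)) =
      ((1:ℝ)/2) ^ (-((2:ℝ) + 1)/2) * (1/2) * Real.Gamma (((2:ℝ) + 1)/2) :=
    integral_rpow_mul_exp_neg_mul_rpow two_pos (by norm_num) (by norm_num)
  have e1 : ∀ x ∈ Set.Ioi (0:ℝ), x ^ (2:ℝ) * Real.exp (-(1/2) * x ^ (2:ℝ)) = x ^ 2 * Eg x := by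
    intro x _
    rw [rpow_two_eq, Eg]
  rw [setIntegral_congr_fun measurableSet_Ioi e1] at key
  have hG : Real.Gamma (((2:ℝ) + 1)/2) = 1/2 * Real.sqrt π := by
    rw [show ((2:ℝ) + 1)/2 = 1/2 + 1 by norm_num, Real.Gamma_add_one (by norm_num),
      Real.Gamma_one_half_eq]
  have hb : ((1:ℝ)/2) ^ (-((2:ℝ) + 1)/2) = Real.sqrt 8 := by
    rw [show -((2:ℝ) + 1)/2 = -(3/2) by norm_num, Real.rpow_neg (by norm_num),
      show (3:ℝ)/2 = 3 * (1/2) by norm_num, Real.rpow_mul (by norm_num),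
      show ((1:ℝ)/2) ^ (3:ℝ) = ((1/2:ℝ)) ^ (3:ℕ) by
        rw [← Real.rpow_natCast (1/2 : ℝ) 3]; norm_num,
      ← Real.sqrt_eq_rpow]
    rw [show ((1:ℝ)/2) ^ (3:ℕ) = 1/8 by norm_num]
    rw [show (1:ℝ)/8 = 8⁻¹ by norm_num, Real.sqrt_inv]
    rw [inv_inv]
  rw [key, hG, hb]
  have h8 : Real.sqrt 8 = 2 * Real.sqrt 2 := by
    rw [show (8:ℝ) = 2 ^ 2 * 2 by norm_num, Real.sqrt_mul (by positivity),
      Real.sqrt_sq (by norm_num)]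
  rw [h8, show (2:ℝ) * (2 * Real.sqrt 2 * (1/2) * (1/2 * Real.sqrt π)) =
    Real.sqrt 2 * Real.sqrt π by ring, ← Real.sqrt_mul (by norm_num : (0:ℝ) ≤ 2) π]

/-- In the quadratic exponential model,
`(2π)⁻¹ ∬ u·|v|·log|v·f(u,v)|·exp(−(u²+v²)/2) du dv = β₁·√(2/π)`
(the moment identity `q₀·E'[Z_t |Ż_t| log|Ż_t|] = β₁√(2/π)`). -/
theorem stmt11 (β₀ β₁ β₂ β₁₁ β₁₂ β₂₂ : ℝ)
    (f : ℝ → ℝ → ℝ)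
    (hf : ∀ y ydot : ℝ, f y ydot =
      Real.exp (β₀ + β₁ * y + β₂ * ydot + β₁₁ / 2 * y ^ 2 + β₁₂ * y * ydot + β₂₂ / 2 * ydot ^ 2)) :
    (2 * π)⁻¹ * ∫ p : ℝ × ℝ,
        p.1 * |p.2| * Real.log |p.2 * f p.1 p.2| * Real.exp (-(p.1 ^ 2 + p.2 ^ 2) / 2)
      = β₁ * Real.sqrt (2 / π) := by
  have hpt : ∀ p : ℝ × ℝ,
      p.1 * |p.2| * Real.log |p.2 * f p.1 p.2| * Real.exp (-(p.1 ^ 2 + p.2 ^ 2) / 2)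
      = (fun u => u * Eg u) p.1 * (fun v => |v| * Real.log |v| * Eg v + β₀ * (|v| * Eg v)
            + β₂ * (v * |v| * Eg v) + β₂₂ / 2 * (v ^ 2 * |v| * Eg v)) p.2
        + (fun u => u ^ 2 * Eg u) p.1 * (fun v => β₁ * (|v| * Eg v)
            + β₁₂ * (v * |v| * Eg v)) p.2
        + (fun u => u ^ 3 * Eg u) p.1 * (fun v => β₁₁ / 2 * (|v| * Eg v)) p.2 := by
    rintro ⟨u, v⟩
    simp only
    by_cases hv : v = 0
    · simp [hv]
    · have hfpos : 0 < f u v := by rw [hf]; exact Real.exp_pos _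
      have hE : Real.exp (-(u ^ 2 + v ^ 2) / 2) = Eg u * Eg v := by
        simp only [Eg]; rw [← Real.exp_add]; congr 1; ring
      rw [abs_mul, abs_of_pos hfpos, Real.log_mul (abs_ne_zero.mpr hv) hfpos.ne', hf,
        Real.log_exp, hE]
      ring
  rw [integral_congr_ae (Filter.Eventually.of_forall hpt), Measure.volume_eq_prod ℝ ℝ]
  have iH1 : Integrable (fun v : ℝ => |v| * Real.log |v| * Eg v + β₀ * (|v| * Eg v)
      + β₂ * (v * |v| * Eg v) + β₂₂ / 2 * (v ^ 2 * |v| * Eg v)) :=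
    ((iglog.add (igabs.const_mul β₀)).add (igvabs.const_mul β₂)).add (igv2abs.const_mul (β₂₂/2))
  have iH2 : Integrable (fun v : ℝ => β₁ * (|v| * Eg v) + β₁₂ * (v * |v| * Eg v)) :=
    (igabs.const_mul β₁).add (igvabs.const_mul β₁₂)
  have iH3 : Integrable (fun v : ℝ => β₁₁ / 2 * (|v| * Eg v)) := igabs.const_mul _
  beta_reduce
  have hP1 : Integrable (fun z : ℝ × ℝ => z.1 * Eg z.1 *
      (|z.2| * Real.log |z.2| * Eg z.2 + β₀ * (|z.2| * Eg z.2) + β₂ * (z.2 * |z.2| * Eg z.2)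
        + β₂₂ / 2 * (z.2 ^ 2 * |z.2| * Eg z.2))) (volume.prod volume) := ig1.mul_prod iH1
  have hP2 : Integrable (fun z : ℝ × ℝ => z.1 ^ 2 * Eg z.1 *
      (β₁ * (|z.2| * Eg z.2) + β₁₂ * (z.2 * |z.2| * Eg z.2))) (volume.prod volume) :=
    (igpow 2).mul_prod iH2
  have hP3 : Integrable (fun z : ℝ × ℝ => z.1 ^ 3 * Eg z.1 *
      (β₁₁ / 2 * (|z.2| * Eg z.2))) (volume.prod volume) := (igpow 3).mul_prod iH3
  have hP12 : Integrable (fun z : ℝ × ℝ => z.1 * Eg z.1 *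
      (|z.2| * Real.log |z.2| * Eg z.2 + β₀ * (|z.2| * Eg z.2) + β₂ * (z.2 * |z.2| * Eg z.2)
        + β₂₂ / 2 * (z.2 ^ 2 * |z.2| * Eg z.2)) + z.1 ^ 2 * Eg z.1 *
      (β₁ * (|z.2| * Eg z.2) + β₁₂ * (z.2 * |z.2| * Eg z.2))) (volume.prod volume) := hP1.add hP2
  have e1 : ∫ (a : ℝ × ℝ), a.1 * Eg a.1 *
      (|a.2| * Real.log |a.2| * Eg a.2 + β₀ * (|a.2| * Eg a.2) + β₂ * (a.2 * |a.2| * Eg a.2)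
        + β₂₂ / 2 * (a.2 ^ 2 * |a.2| * Eg a.2)) ∂(volume.prod volume)
      = (∫ u : ℝ, u * Eg u) * ∫ v : ℝ, (|v| * Real.log |v| * Eg v + β₀ * (|v| * Eg v)
        + β₂ * (v * |v| * Eg v) + β₂₂ / 2 * (v ^ 2 * |v| * Eg v)) :=
    integral_prod_mul (fun u : ℝ => u * Eg u) (fun v : ℝ => |v| * Real.log |v| * Eg v
      + β₀ * (|v| * Eg v) + β₂ * (v * |v| * Eg v) + β₂₂ / 2 * (v ^ 2 * |v| * Eg v))
  have e2 : ∫ (a : ℝ × ℝ), a.1 ^ 2 * Eg a.1 *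
      (β₁ * (|a.2| * Eg a.2) + β₁₂ * (a.2 * |a.2| * Eg a.2)) ∂(volume.prod volume)
      = (∫ u : ℝ, u ^ 2 * Eg u) * ∫ v : ℝ, (β₁ * (|v| * Eg v) + β₁₂ * (v * |v| * Eg v)) :=
    integral_prod_mul (fun u : ℝ => u ^ 2 * Eg u)
      (fun v : ℝ => β₁ * (|v| * Eg v) + β₁₂ * (v * |v| * Eg v))
  have e3 : ∫ (a : ℝ × ℝ), a.1 ^ 3 * Eg a.1 *
      (β₁₁ / 2 * (|a.2| * Eg a.2)) ∂(volume.prod volume)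
      = (∫ u : ℝ, u ^ 3 * Eg u) * ∫ v : ℝ, β₁₁ / 2 * (|v| * Eg v) :=
    integral_prod_mul (fun u : ℝ => u ^ 3 * Eg u) (fun v : ℝ => β₁₁ / 2 * (|v| * Eg v))
  rw [integral_add hP12 hP3, integral_add hP1 hP2, e1, e2, e3, int_odd1, int_odd3, int_sq]
  rw [integral_add (igabs.const_mul β₁) (igvabs.const_mul β₁₂),
    integral_const_mul, integral_const_mul, int_abs, int_oddvabs]
  have h2pi : Real.sqrt (2 / π) = Real.sqrt (2 * π) / π := by
    rw [show (2:ℝ) / π = 2 * π / π ^ 2 by field_simp,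
      Real.sqrt_div (by positivity) (π ^ 2), Real.sqrt_sq pi_pos.le]
  rw [h2pi]
  field_simp
  ring
end

section
/- Let β₀,β₁,β₂,β₁₁,β₁₂,β₂₂ ∈ ℝ, f(y,ẏ) = exp(β₀ + β₁y + β₂ẏ + (β₁₁/2)y² + β₁₂yẏ + (β₂₂/2)ẏ²), and m₁ := (2π)^{−1/2} ∫_ℝ |u| log|u| exp(−u²/2) du. Then (2π)⁻¹ ∬_{ℝ²} |u·v| · log|v·f(u,v)| · exp(−(u²+v²)/2) du dv = m₁·√(2/π) + (2/π)·(β₀ + β₁₁ + β₂₂). Equivalently, for independent standard normals U₁, U₂, E[|U₁ U₂| log|U₂ f(U₁,U₂)|] = m₁√(2/π) + (2/π)(β₀ + β₁₁ + β₂₂), which is the moment identity q₀·E'[|Z_t Ż_t| log|Ż_t|] = m₁√(2/π) + (2/π)(β₀ + β₁₁ + β₂₂) in the quadratic exponential model. -/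
open MeasureTheory Real
open Filter Set Topology

lemma intPow (n : ℕ) : Integrable (fun u : ℝ => u ^ n * Real.exp (-u ^ 2 / 2)) := by
  have h := integrable_rpow_mul_exp_neg_mul_sq (b := (1:ℝ)/2) (by norm_num)
    (s := (n : ℝ)) (lt_of_lt_of_le neg_one_lt_zero (Nat.cast_nonneg n))
  refine h.congr (Filter.Eventually.of_forall fun x => ?_)
  show x ^ (n : ℝ) * Real.exp (-(1/2) * x ^ 2) = _
  rw [Real.rpow_natCast, show -(1/2 : ℝ) * x ^ 2 = -x ^ 2 / 2 by ring]

lemma derivE (x : ℝ) : HasDerivAt (fun x : ℝ => Real.exp (-x ^ 2 / 2))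
    (Real.exp (-x ^ 2 / 2) * (-x)) x := by
  have h1 : HasDerivAt (fun x : ℝ => -x ^ 2 / 2) (-x) x := by
    have := ((hasDerivAt_pow 2 x).neg.div_const 2)
    refine this.congr_deriv ?_
    push_cast
    ring
  exact h1.exp

lemma intIoi1 : ∫ x in Set.Ioi (0:ℝ), x * Real.exp (-x ^ 2 / 2) = 1 := by
  have hd : ∀ x ∈ Set.Ioi (0:ℝ), HasDerivAt (fun x : ℝ => -Real.exp (-x ^ 2 / 2))
      (x * Real.exp (-x ^ 2 / 2)) x := by
    intro x _
    have := (derivE x).neg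
    refine this.congr_deriv ?_
    ring
  have ht : Tendsto (fun x : ℝ => -Real.exp (-x ^ 2 / 2)) atTop (𝓝 0) := by
    have h1 : Tendsto (fun x : ℝ => x ^ 2 / 2) atTop atTop :=
      (tendsto_pow_atTop two_ne_zero).atTop_div_const two_pos
    have h2 : Tendsto (fun x : ℝ => -x ^ 2 / 2) atTop atBot := by
      have := tendsto_neg_atTop_atBot.comp h1
      refine this.congr fun x => ?_
      simp [Function.comp]
      ring
    have := (Real.tendsto_exp_atBot.comp h2).neg
    simpa [Function.comp] using this
  have hint : IntegrableOn (fun x : ℝ => x * Real.exp (-x ^ 2 / 2)) (Set.Ioi 0) := by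
    simpa using (intPow 1).integrableOn
  have := integral_Ioi_of_hasDerivAt_of_tendsto
    ((Continuous.continuousWithinAt (by fun_prop))) hd hint ht
  rw [this]
  norm_num

lemma intIoi3 : ∫ x in Set.Ioi (0:ℝ), x ^ 3 * Real.exp (-x ^ 2 / 2) = 2 := by
  have hd : ∀ x ∈ Set.Ioi (0:ℝ),
      HasDerivAt (fun x : ℝ => -((x ^ 2 + 2) * Real.exp (-x ^ 2 / 2)))
      (x ^ 3 * Real.exp (-x ^ 2 / 2)) x := by
    intro x _
    have := (((hasDerivAt_pow 2 x).add_const 2).mul (derivE x)).neg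
    refine this.congr_deriv ?_
    push_cast
    ring
  have ht : Tendsto (fun x : ℝ => -((x ^ 2 + 2) * Real.exp (-x ^ 2 / 2))) atTop (𝓝 0) := by
    have base : Tendsto (fun t : ℝ => (2 * t + 2) * Real.exp (-t)) atTop (𝓝 0) := by
      have a1 := tendsto_pow_mul_exp_neg_atTop_nhds_zero 1
      have a0 := tendsto_pow_mul_exp_neg_atTop_nhds_zero 0
      have h := (a1.const_mul 2).add (a0.const_mul 2)
      norm_num at h
      refine h.congr fun x => ?_
      ring
    have h1 : Tendsto (fun x : ℝ => x ^ 2 / 2) atTop atTop :=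
      (tendsto_pow_atTop two_ne_zero).atTop_div_const two_pos
    have h2 : Tendsto (fun x : ℝ => -((2 * (x ^ 2 / 2) + 2) * Real.exp (-(x ^ 2 / 2))))
        atTop (𝓝 0) := by simpa [Function.comp] using (base.comp h1).neg
    refine h2.congr fun x => ?_
    rw [show -(x ^ 2 / 2) = -x ^ 2 / 2 by ring]
    ring
  have hint : IntegrableOn (fun x : ℝ => x ^ 3 * Real.exp (-x ^ 2 / 2)) (Set.Ioi 0) :=
    (intPow 3).integrableOn
  have := integral_Ioi_of_hasDerivAt_of_tendsto ((Continuous.continuousWithinAt (by fun_prop))) hd hint ht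
  rw [this]
  norm_num

lemma intA : (∫ u : ℝ, |u| * Real.exp (-u ^ 2 / 2)) = 2 := by
  have h := integral_comp_abs (f := fun x => x * Real.exp (-x ^ 2 / 2))
  have e : (∫ u : ℝ, |u| * Real.exp (-u ^ 2 / 2))
      = ∫ x : ℝ, |x| * Real.exp (-|x| ^ 2 / 2) := by
    congr 1; funext u; rw [sq_abs]
  rw [e, h, intIoi1, mul_one]

lemma intB : (∫ u : ℝ, |u| * u * Real.exp (-u ^ 2 / 2)) = 0 := by
  have h := integral_neg_eq_self (fun u : ℝ => |u| * u * Real.exp (-u ^ 2 / 2)) volume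
  simp only [abs_neg, neg_sq, mul_neg, neg_mul, integral_neg] at h
  linarith

lemma intC : (∫ u : ℝ, |u| * u ^ 2 * Real.exp (-u ^ 2 / 2)) = 4 := by
  have h := integral_comp_abs (f := fun x => x ^ 3 * Real.exp (-x ^ 2 / 2))
  have e : (∫ u : ℝ, |u| * u ^ 2 * Real.exp (-u ^ 2 / 2))
      = ∫ x : ℝ, |x| ^ 3 * Real.exp (-|x| ^ 2 / 2) := by
    congr 1; funext u
    rw [sq_abs, show (|u|:ℝ) ^ 3 = |u| * u ^ 2 by rw [pow_succ, sq_abs, mul_comm]]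
  rw [e, h, intIoi3]
  norm_num

lemma I1 : Integrable (fun u : ℝ => |u| * Real.exp (-u ^ 2 / 2)) := by
  refine (intPow 1).abs.congr (Filter.Eventually.of_forall fun x => ?_)
  simp [abs_mul, abs_of_pos (Real.exp_pos _)]

lemma I3 : Integrable (fun u : ℝ => |u| * u * Real.exp (-u ^ 2 / 2)) := by
  refine (intPow 2).mono' ?_ (Filter.Eventually.of_forall fun x => ?_)
  · exact ((measurable_id.abs.mul measurable_id).mul
      (by fun_prop : Measurable fun u : ℝ => Real.exp (-u ^ 2 / 2))).aestronglyMeasurable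
  · rw [Real.norm_eq_abs, abs_mul, abs_mul, abs_abs, abs_of_pos (Real.exp_pos _),
      ← sq, sq_abs]

lemma I5 : Integrable (fun u : ℝ => |u| * u ^ 2 * Real.exp (-u ^ 2 / 2)) := by
  refine (intPow 3).abs.congr (Filter.Eventually.of_forall fun x => ?_)
  show |x ^ 3 * Real.exp (-x ^ 2 / 2)| = _
  rw [abs_mul, abs_of_pos (Real.exp_pos _), abs_pow, pow_succ, sq_abs]
  ring

lemma I2 : Integrable (fun v : ℝ => |v| * Real.log |v| * Real.exp (-v ^ 2 / 2)) := by
  have hmaj : Integrable (fun v : ℝ => v ^ 2 * Real.exp (-v ^ 2 / 2)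
      + v ^ 0 * Real.exp (-v ^ 2 / 2)) := (intPow 2).add (intPow 0)
  refine hmaj.mono' ?_ ?_
  · exact ((measurable_id.abs.mul (Real.measurable_log.comp measurable_id.abs)).mul
      (by fun_prop : Measurable fun u : ℝ => Real.exp (-u ^ 2 / 2))).aestronglyMeasurable
  · have h0 : ∀ᵐ v : ℝ, v ≠ 0 := by
      have hs : {v : ℝ | ¬ v ≠ 0} = {0} := by ext; simp
      rw [ae_iff, hs]
      exact measure_singleton 0
    filter_upwards [h0] with v hv
    have hv' : 0 < |v| := abs_pos.mpr hv
    have hinv : 0 < |v|⁻¹ := inv_pos.mpr hv'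
    have hlog : abs (Real.log |v|) ≤ |v| + |v|⁻¹ := by
      have h1 := Real.log_le_sub_one_of_pos hv'
      have h2 := Real.log_le_sub_one_of_pos hinv
      rw [Real.log_inv] at h2
      rw [abs_le]
      constructor <;> linarith
    have hE := (Real.exp_pos (-v ^ 2 / 2)).le
    rw [Real.norm_eq_abs, abs_mul, abs_mul, abs_abs, abs_of_pos (Real.exp_pos _)]
    have step : |v| * abs (Real.log |v|) ≤ v ^ 2 + 1 := by
      calc |v| * abs (Real.log |v|) ≤ |v| * (|v| + |v|⁻¹) :=
            mul_le_mul_of_nonneg_left hlog (abs_nonneg v)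
        _ = v ^ 2 + 1 := by
            rw [mul_add, mul_inv_cancel₀ hv'.ne', ← sq, sq_abs]
    calc |v| * abs (Real.log |v|) * Real.exp (-v ^ 2 / 2)
        ≤ (v ^ 2 + 1) * Real.exp (-v ^ 2 / 2) := mul_le_mul_of_nonneg_right step hE
      _ = v ^ 2 * Real.exp (-v ^ 2 / 2) + v ^ 0 * Real.exp (-v ^ 2 / 2) := by ring


/-- In the quadratic exponential model, with
`m₁ = (2π)^{−1/2} ∫ |u| log|u| exp(−u²/2) du`,
`(2π)⁻¹ ∬ |u·v|·log|v·f(u,v)|·exp(−(u²+v²)/2) du dv = m₁√(2/π) + (2/π)(β₀ + β₁₁ + β₂₂)`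
(the moment identity `q₀·E'[|Z_t Ż_t| log|Ż_t|] = m₁√(2/π) + (2/π)(β₀ + β₁₁ + β₂₂)`). -/
theorem stmt12 (β₀ β₁ β₂ β₁₁ β₁₂ β₂₂ : ℝ)
    (f : ℝ → ℝ → ℝ)
    (hf : ∀ y ydot : ℝ, f y ydot =
      Real.exp (β₀ + β₁ * y + β₂ * ydot + β₁₁ / 2 * y ^ 2 + β₁₂ * y * ydot + β₂₂ / 2 * ydot ^ 2))
    (m₁ : ℝ)
    (hm₁ : m₁ = (Real.sqrt (2 * π))⁻¹ * ∫ u : ℝ, |u| * Real.log |u| * Real.exp (-u ^ 2 / 2)) :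
    (2 * π)⁻¹ * ∫ p : ℝ × ℝ,
        |p.1 * p.2| * Real.log |p.2 * f p.1 p.2| * Real.exp (-(p.1 ^ 2 + p.2 ^ 2) / 2)
      = m₁ * Real.sqrt (2 / π) + 2 / π * (β₀ + β₁₁ + β₂₂) := by
  obtain ⟨g1, hg1⟩ : ∃ g : ℝ → ℝ, g = fun u => |u| * Real.exp (-u ^ 2 / 2) := ⟨_, rfl⟩
  obtain ⟨g2, hg2⟩ : ∃ g : ℝ → ℝ, g = fun u => |u| * Real.log |u| * Real.exp (-u ^ 2 / 2) :=
    ⟨_, rfl⟩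
  obtain ⟨g3, hg3⟩ : ∃ g : ℝ → ℝ, g = fun u => |u| * u * Real.exp (-u ^ 2 / 2) := ⟨_, rfl⟩
  obtain ⟨g5, hg5⟩ : ∃ g : ℝ → ℝ, g = fun u => |u| * u ^ 2 * Real.exp (-u ^ 2 / 2) := ⟨_, rfl⟩
  have Ig1 : Integrable g1 := by rw [hg1]; exact I1
  have Ig2 : Integrable g2 := by rw [hg2]; exact I2
  have Ig3 : Integrable g3 := by rw [hg3]; exact I3
  have Ig5 : Integrable g5 := by rw [hg5]; exact I5
  have vA : (∫ u : ℝ, g1 u) = 2 := by simp only [hg1]; exact intA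
  have vB : (∫ u : ℝ, g3 u) = 0 := by simp only [hg3]; exact intB
  have vC : (∫ u : ℝ, g5 u) = 4 := by simp only [hg5]; exact intC
  have hsplit : ∀ p : ℝ × ℝ,
      |p.1 * p.2| * Real.log |p.2 * f p.1 p.2| * Real.exp (-(p.1 ^ 2 + p.2 ^ 2) / 2)
      = g1 p.1 * g2 p.2 + β₀ * (g1 p.1 * g1 p.2) + β₁ * (g3 p.1 * g1 p.2)
        + β₂ * (g1 p.1 * g3 p.2) + β₁₁ / 2 * (g5 p.1 * g1 p.2)
        + β₁₂ * (g3 p.1 * g3 p.2) + β₂₂ / 2 * (g1 p.1 * g5 p.2) := by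
    intro p
    simp only [hg1, hg2, hg3, hg5]
    rcases eq_or_ne p.2 0 with hv | hv
    · rw [hv]; simp [abs_mul]
    · rw [hf p.1 p.2,
        show Real.exp (-(p.1 ^ 2 + p.2 ^ 2) / 2)
          = Real.exp (-p.1 ^ 2 / 2) * Real.exp (-p.2 ^ 2 / 2) by
            rw [← Real.exp_add]; congr 1; ring,
        show |p.2 * Real.exp (β₀ + β₁ * p.1 + β₂ * p.2 + β₁₁ / 2 * p.1 ^ 2
            + β₁₂ * p.1 * p.2 + β₂₂ / 2 * p.2 ^ 2)| = |p.2| * Real.exp (β₀ + β₁ * p.1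
            + β₂ * p.2 + β₁₁ / 2 * p.1 ^ 2 + β₁₂ * p.1 * p.2 + β₂₂ / 2 * p.2 ^ 2) by
            rw [abs_mul, abs_of_pos (Real.exp_pos _)],
        Real.log_mul (abs_ne_zero.mpr hv) (Real.exp_ne_zero _), Real.log_exp, abs_mul]
      ring
  have key : (∫ p : ℝ × ℝ,
      |p.1 * p.2| * Real.log |p.2 * f p.1 p.2| * Real.exp (-(p.1 ^ 2 + p.2 ^ 2) / 2))
      = 2 * (∫ u : ℝ, g2 u) + 4 * β₀ + 4 * β₁₁ + 4 * β₂₂ := by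
    simp_rw [hsplit]
    rw [MeasureTheory.Measure.volume_eq_prod]
    have Q1 : Integrable (fun p : ℝ × ℝ => g1 p.1 * g2 p.2) (volume.prod volume) :=
      Ig1.mul_prod Ig2
    have Q2 : Integrable (fun p : ℝ × ℝ => β₀ * (g1 p.1 * g1 p.2)) (volume.prod volume) :=
      (Ig1.mul_prod Ig1).const_mul _
    have Q3 : Integrable (fun p : ℝ × ℝ => β₁ * (g3 p.1 * g1 p.2)) (volume.prod volume) :=
      (Ig3.mul_prod Ig1).const_mul _
    have Q4 : Integrable (fun p : ℝ × ℝ => β₂ * (g1 p.1 * g3 p.2)) (volume.prod volume) :=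
      (Ig1.mul_prod Ig3).const_mul _
    have Q5 : Integrable (fun p : ℝ × ℝ => β₁₁ / 2 * (g5 p.1 * g1 p.2)) (volume.prod volume) :=
      (Ig5.mul_prod Ig1).const_mul _
    have Q6 : Integrable (fun p : ℝ × ℝ => β₁₂ * (g3 p.1 * g3 p.2)) (volume.prod volume) :=
      (Ig3.mul_prod Ig3).const_mul _
    have Q7 : Integrable (fun p : ℝ × ℝ => β₂₂ / 2 * (g1 p.1 * g5 p.2)) (volume.prod volume) :=
      (Ig1.mul_prod Ig5).const_mul _
    have S2 : Integrable (fun p : ℝ × ℝ => g1 p.1 * g2 p.2 + β₀ * (g1 p.1 * g1 p.2))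
        (volume.prod volume) := Q1.add Q2
    have S3 : Integrable (fun p : ℝ × ℝ => g1 p.1 * g2 p.2 + β₀ * (g1 p.1 * g1 p.2)
        + β₁ * (g3 p.1 * g1 p.2)) (volume.prod volume) := S2.add Q3
    have S4 : Integrable (fun p : ℝ × ℝ => g1 p.1 * g2 p.2 + β₀ * (g1 p.1 * g1 p.2)
        + β₁ * (g3 p.1 * g1 p.2) + β₂ * (g1 p.1 * g3 p.2)) (volume.prod volume) := S3.add Q4
    have S5 : Integrable (fun p : ℝ × ℝ => g1 p.1 * g2 p.2 + β₀ * (g1 p.1 * g1 p.2)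
        + β₁ * (g3 p.1 * g1 p.2) + β₂ * (g1 p.1 * g3 p.2) + β₁₁ / 2 * (g5 p.1 * g1 p.2))
        (volume.prod volume) := S4.add Q5
    have S6 : Integrable (fun p : ℝ × ℝ => g1 p.1 * g2 p.2 + β₀ * (g1 p.1 * g1 p.2)
        + β₁ * (g3 p.1 * g1 p.2) + β₂ * (g1 p.1 * g3 p.2) + β₁₁ / 2 * (g5 p.1 * g1 p.2)
        + β₁₂ * (g3 p.1 * g3 p.2)) (volume.prod volume) := S5.add Q6
    rw [integral_add S6 Q7, integral_add S5 Q6, integral_add S4 Q5, integral_add S3 Q4,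
      integral_add S2 Q3, integral_add Q1 Q2]
    simp only [integral_const_mul, integral_prod_mul]
    rw [vA, vB, vC]
    ring
  rw [key, hm₁]
  have hπ : (0:ℝ) < π := pi_pos
  have hs2 : Real.sqrt (2 / π) = Real.sqrt (2 * π) / π := by
    rw [show (2 / π : ℝ) = (2 * π) / π ^ 2 by field_simp,
      Real.sqrt_div (by positivity), Real.sqrt_sq hπ.le]
  rw [hs2]
  have h2π : Real.sqrt (2 * π) ≠ 0 := by positivity
  have hJ : (∫ u : ℝ, |u| * Real.log |u| * Real.exp (-u ^ 2 / 2)) = ∫ u : ℝ, g2 u := by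
    simp only [hg2]
  rw [hJ]
  set J := ∫ u : ℝ, g2 u with hJdef
  field_simp
  ring
end

section
/- Let f₁, f₂ : ℝ → (0,∞) be continuously differentiable, assume F(v) := v·f₂(v) is a strictly increasing bijection of ℝ onto ℝ with F'(v) > 0 for all v, and let k = F⁻¹ denote its (differentiable) inverse. Assume q₀ := (2π)⁻¹ ∬_{ℝ²} exp(−(u²+v²)/2)/(f₁(u)f₂(v)) du dv < ∞. Then for every bounded Borel function g : ℝ² → ℝ, (2πq₀)⁻¹ ∬_{ℝ²} g(u, F(v)·f₁(u)) / (f₁(u)f₂(v)) · exp(−(u²+v²)/2) du dv = ∬_{ℝ²} g(z,ż) · p(z,ż) dz dż, where p(z,ż) = (2πq₀)⁻¹ · k'(ż/f₁(z)) / (f₁(z)² · f₂(k(ż/f₁(z)))) · exp(−(z² + k(ż/f₁(z))²)/2). In particular, in the model with no interaction f(y,ẏ) = f₁(y)f₂(ẏ), the stationary joint density of (Z_t, Ż_t) is p. -/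
private lemma stmt14_aux (a b d c G E : ℝ) (ha : 0 < a) (hb : 0 < b) (hd : 0 < d) :
    |a * b| • (G * (c * a⁻¹ / (b ^ 2 * d) * E)) = c * (G / (b * d) * E) := by
  rw [smul_eq_mul, abs_of_pos (mul_pos ha hb)]
  field_simp

open MeasureTheory Real

/-- In the model with no interaction `f(y,ẏ) = f₁(y)f₂(ẏ)` with
`F(v) = v f₂(v)` a strictly increasing bijection with inverse `k`, for every bounded
Borel `g`, the change of variables `z = u, ż = F(v)f₁(u)` identifies
`(2πq₀)⁻¹ ∬ g(u, F(v)f₁(u))/(f₁(u)f₂(v)) e^{−(u²+v²)/2} du dv` with `∬ g·p`, where `p`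
is the stationary joint density of `(Z_t, Ż_t)`. -/
theorem stmt14 (f₁ f₂ : ℝ → ℝ)
    (hf₁_pos : ∀ v, 0 < f₁ v) (hf₂_pos : ∀ v, 0 < f₂ v)
    (hf₁ : ContDiff ℝ 1 f₁) (hf₂ : ContDiff ℝ 1 f₂)
    (F : ℝ → ℝ) (hF : ∀ v, F v = v * f₂ v)
    (hF_mono : StrictMono F) (hF_bij : Function.Bijective F)
    (hF' : ∀ v, 0 < deriv F v)
    (k : ℝ → ℝ) (hk₁ : Function.LeftInverse k F) (hk₂ : Function.RightInverse k F)
    (h_int : Integrable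
      (fun p : ℝ × ℝ => Real.exp (-(p.1 ^ 2 + p.2 ^ 2) / 2) / (f₁ p.1 * f₂ p.2)))
    (q₀ : ℝ)
    (hq₀ : q₀ = (2 * π)⁻¹ *
      ∫ p : ℝ × ℝ, Real.exp (-(p.1 ^ 2 + p.2 ^ 2) / 2) / (f₁ p.1 * f₂ p.2))
    (p : ℝ → ℝ → ℝ)
    (hp : ∀ z zdot : ℝ, p z zdot =
      (2 * π * q₀)⁻¹ * deriv k (zdot / f₁ z) / ((f₁ z) ^ 2 * f₂ (k (zdot / f₁ z))) *
        Real.exp (-(z ^ 2 + (k (zdot / f₁ z)) ^ 2) / 2))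
    (g : ℝ × ℝ → ℝ) (hg : Measurable g) (C : ℝ) (hgC : ∀ x, |g x| ≤ C) :
    (2 * π * q₀)⁻¹ * ∫ w : ℝ × ℝ,
        g (w.1, F w.2 * f₁ w.1) / (f₁ w.1 * f₂ w.2) * Real.exp (-(w.1 ^ 2 + w.2 ^ 2) / 2)
      = ∫ w : ℝ × ℝ, g w * p w.1 w.2 := by
  have hf₁d : Differentiable ℝ f₁ := hf₁.differentiable one_ne_zero
  have hf₂d : Differentiable ℝ f₂ := hf₂.differentiable one_ne_zero
  have hFeq : F = fun v => v * f₂ v := funext hF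
  have hFd : Differentiable ℝ F := by
    rw [hFeq]; exact differentiable_id.mul hf₂d
  -- continuity of k
  have hkc : Continuous k := by
    set e := StrictMono.orderIsoOfSurjective F hF_mono hF_bij.2 with he
    have hcoe : ⇑e = F := StrictMono.coe_orderIsoOfSurjective F hF_mono hF_bij.2
    have hk_eq : k = ⇑e.symm := by
      funext x
      apply hF_bij.1
      rw [hk₂ x]
      exact ((congrFun hcoe (e.symm x)).symm.trans (e.apply_symm_apply x)).symm
    rw [hk_eq]
    exact e.symm.toHomeomorph.continuous
  -- derivative of k
  have hkderiv : ∀ v : ℝ, HasDerivAt k (deriv F v)⁻¹ (F v) := by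
    intro v
    have hFv : HasDerivAt F (deriv F v) (k (F v)) := by
      rw [hk₁ v]; exact (hFd v).hasDerivAt
    exact HasDerivAt.of_local_left_inverse hkc.continuousAt hFv (hF' v).ne'
      (Filter.Eventually.of_forall hk₂)
  have hderivk : ∀ v : ℝ, deriv k (F v) = (deriv F v)⁻¹ := fun v => (hkderiv v).deriv
  -- the change of variables map
  set Φ : ℝ × ℝ → ℝ × ℝ := fun w => (w.1, F w.2 * f₁ w.1) with hΦ
  set L : ℝ × ℝ → (ℝ × ℝ →L[ℝ] ℝ × ℝ) := fun w =>
    (ContinuousLinearMap.fst ℝ ℝ ℝ).prod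
      (F w.2 • ((deriv f₁ w.1) • ContinuousLinearMap.fst ℝ ℝ ℝ)
        + f₁ w.1 • ((deriv F w.2) • ContinuousLinearMap.snd ℝ ℝ ℝ)) with hL
  have hΦderiv : ∀ w : ℝ × ℝ, HasFDerivAt Φ (L w) w := by
    intro w
    have h1 : HasFDerivAt (fun w : ℝ × ℝ => F w.2)
        ((deriv F w.2) • ContinuousLinearMap.snd ℝ ℝ ℝ) w :=
      HasDerivAt.comp_hasFDerivAt w ((hFd w.2).hasDerivAt) hasFDerivAt_snd
    have h2 : HasFDerivAt (fun w : ℝ × ℝ => f₁ w.1)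
        ((deriv f₁ w.1) • ContinuousLinearMap.fst ℝ ℝ ℝ) w :=
      HasDerivAt.comp_hasFDerivAt w ((hf₁d w.1).hasDerivAt) hasFDerivAt_fst
    exact HasFDerivAt.prodMk hasFDerivAt_fst (h1.mul h2)
  have hdet : ∀ w : ℝ × ℝ, (L w).det = deriv F w.2 * f₁ w.1 := by
    intro w
    have : (L w).det = LinearMap.det ((L w) : ℝ × ℝ →ₗ[ℝ] ℝ × ℝ) := rfl
    rw [this, ← LinearMap.det_toMatrix (Module.Basis.finTwoProd ℝ), Matrix.det_fin_two]
    simp [LinearMap.toMatrix_apply, hL, Module.Basis.finTwoProd]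
    ring
  have hΦinj : Set.InjOn Φ Set.univ := by
    intro a _ b _ hab
    simp only [hΦ, Prod.mk.injEq] at hab
    obtain ⟨h1, h2⟩ := hab
    have : F a.2 = F b.2 := by
      have := (hf₁_pos a.1).ne'
      rw [h1] at h2
      exact mul_right_cancel₀ (hf₁_pos b.1).ne' h2
    exact Prod.ext h1 (hF_mono.injective this)
  have hΦsurj : Φ '' Set.univ = Set.univ := by
    apply Set.eq_univ_of_forall
    rintro ⟨z, zd⟩
    refine ⟨(z, k (zd / f₁ z)), Set.mem_univ _, ?_⟩
    simp only [hΦ, hk₂ (zd / f₁ z)]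
    rw [div_mul_cancel₀ _ (hf₁_pos z).ne']
  -- apply the change of variables theorem
  have key : ∫ w : ℝ × ℝ, g w * p w.1 w.2
      = ∫ w : ℝ × ℝ, |(L w).det| • (g (Φ w) * p (Φ w).1 (Φ w).2) := by
    have h := integral_image_eq_integral_abs_det_fderiv_smul volume MeasurableSet.univ
        (fun x _ => (hΦderiv x).hasFDerivWithinAt) hΦinj (fun w => g w * p w.1 w.2)
    rw [hΦsurj, setIntegral_univ, setIntegral_univ] at h
    exact h
  rw [key]
  rw [← integral_const_mul]
  congr 1
  funext w
  obtain ⟨u, v⟩ := w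
  have hkv : k (F v * f₁ u / f₁ u) = v := by
    rw [mul_div_cancel_right₀ _ (hf₁_pos u).ne', hk₁ v]
  have hdkv : deriv k (F v * f₁ u / f₁ u) = (deriv F v)⁻¹ := by
    rw [mul_div_cancel_right₀ _ (hf₁_pos u).ne', hderivk v]
  have h1 : (f₁ u : ℝ) ≠ 0 := (hf₁_pos u).ne'
  have h2 : (f₂ v : ℝ) ≠ 0 := (hf₂_pos v).ne'
  have h3 : deriv F v ≠ 0 := (hF' v).ne'
  rw [hdet, hp]
  simp only [hΦ]
  rw [hkv, hdkv]
  exact (stmt14_aux (deriv F v) (f₁ u) (f₂ v) _ _ _ (hF' v) (hf₁_pos u) (hf₂_pos v)).symm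
end

section
/- Let f₁, f₂ : ℝ → (0,∞) be continuously differentiable, assume F(v) := v·f₂(v) is a strictly increasing bijection of ℝ with F'(v) > 0 for all v, let k = F⁻¹, assume the normalization ∫_ℝ exp(−u²/2)/f₂(u) du = 1, and set q₀ := (2π)⁻¹ ∫_ℝ exp(−u²/2)/f₁(u) du, assumed finite. Define p(z,ż) = (2πq₀)⁻¹ · k'(ż/f₁(z)) / (f₁(z)² f₂(k(ż/f₁(z)))) · exp(−(z² + k(ż/f₁(z))²)/2). Then for every z ∈ ℝ, ∫_ℝ p(z,ż) dż = (2πq₀)⁻¹ · exp(−z²/2)/f₁(z); that is, the stationary marginal density of Z depends only on f₁ and equals p_Z(z) = (2πq₀)⁻¹ exp(−z²/2)/f₁(z). -/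
open MeasureTheory Real

/-- In the model with no interaction, under the normalization
`∫ e^{−u²/2}/f₂(u) du = 1` and with `q₀ = (2π)⁻¹ ∫ e^{−u²/2}/f₁(u) du` finite,
the stationary marginal density of `Z` depends only on `f₁`:
`∫ p(z,ż) dż = (2πq₀)⁻¹ e^{−z²/2}/f₁(z)` for every `z`. -/
theorem stmt15 (f₁ f₂ : ℝ → ℝ)
    (hf₁_pos : ∀ v, 0 < f₁ v) (hf₂_pos : ∀ v, 0 < f₂ v)
    (hf₁ : ContDiff ℝ 1 f₁) (hf₂ : ContDiff ℝ 1 f₂)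
    (F : ℝ → ℝ) (hF : ∀ v, F v = v * f₂ v)
    (hF_mono : StrictMono F) (hF_bij : Function.Bijective F)
    (hF' : ∀ v, 0 < deriv F v)
    (k : ℝ → ℝ) (hk₁ : Function.LeftInverse k F) (hk₂ : Function.RightInverse k F)
    (hf₂_norm : ∫ u : ℝ, Real.exp (-u ^ 2 / 2) / f₂ u = 1)
    (h_int : Integrable (fun u : ℝ => Real.exp (-u ^ 2 / 2) / f₁ u))
    (q₀ : ℝ) (hq₀ : q₀ = (2 * π)⁻¹ * ∫ u : ℝ, Real.exp (-u ^ 2 / 2) / f₁ u)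
    (p : ℝ → ℝ → ℝ)
    (hp : ∀ z zdot : ℝ, p z zdot =
      (2 * π * q₀)⁻¹ * deriv k (zdot / f₁ z) / ((f₁ z) ^ 2 * f₂ (k (zdot / f₁ z))) *
        Real.exp (-(z ^ 2 + (k (zdot / f₁ z)) ^ 2) / 2)) :
    ∀ z : ℝ, ∫ zdot : ℝ, p z zdot
      = (2 * π * q₀)⁻¹ * Real.exp (-z ^ 2 / 2) / f₁ z := by
  -- F is differentiable
  have hFfun : F = fun v => v * f₂ v := funext hF
  have hFd : Differentiable ℝ F := by
    rw [hFfun]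
    exact differentiable_id.mul (hf₂.differentiable one_ne_zero)
  -- k is strictly monotone, surjective, continuous
  have hk_mono : StrictMono k := fun a b h =>
    hF_mono.lt_iff_lt.mp (by rw [hk₂ a, hk₂ b]; exact h)
  have hk_surj : Function.Surjective k := hk₁.surjective
  have hk_cont : Continuous k := hk_mono.monotone.continuous_of_surjective hk_surj
  -- derivative of k
  have hk_deriv : ∀ t : ℝ, HasDerivAt k (deriv F (k t))⁻¹ t := fun t =>
    HasDerivAt.of_local_left_inverse hk_cont.continuousAt ((hFd (k t)).hasDerivAt)
      (ne_of_gt (hF' (k t))) (Filter.Eventually.of_forall fun y => hk₂ y)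
  have hk_deriv' : ∀ t : ℝ, deriv k t = (deriv F (k t))⁻¹ := fun t =>
    (hk_deriv t).deriv
  have hk_deriv_pos : ∀ t : ℝ, 0 < deriv k t := fun t => by
    rw [hk_deriv' t]; exact inv_pos.mpr (hF' (k t))
  -- the inner function
  set g : ℝ → ℝ := fun u => Real.exp (-u ^ 2 / 2) / f₂ u with hg
  set φ : ℝ → ℝ := fun t => deriv k t * g (k t) with hφ
  -- change of variables: ∫ φ = ∫ g = 1
  have hφ_int : ∫ t : ℝ, φ t = 1 := by
    have h := integral_image_eq_integral_abs_deriv_smul (s := Set.univ)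
      MeasurableSet.univ
      (fun x _ => by
        have := hk_deriv x
        rw [← hk_deriv' x] at this
        exact this.hasDerivWithinAt)
      (hk_mono.injective.injOn) g
    rw [Set.image_univ, hk_surj.range_eq] at h
    simp only [Measure.restrict_univ, smul_eq_mul] at h
    rw [hφ]
    calc ∫ t : ℝ, deriv k t * g (k t)
        = ∫ t : ℝ, |deriv k t| * g (k t) := by
          congr 1; funext t; rw [abs_of_pos (hk_deriv_pos t)]
      _ = ∫ u : ℝ, g u := h.symm
      _ = 1 := hf₂_norm
  intro z
  set a : ℝ := f₁ z with ha
  have ha_pos : 0 < a := hf₁_pos z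
  -- rewrite p z · as a constant times φ (· / a)
  have hpt : ∀ zdot : ℝ, p z zdot
      = ((2 * π * q₀)⁻¹ * Real.exp (-z ^ 2 / 2) * (a ^ 2)⁻¹) * φ (zdot / a) := by
    intro zdot
    rw [hp z zdot, hφ, hg]
    have hexp : Real.exp (-(z ^ 2 + (k (zdot / f₁ z)) ^ 2) / 2)
        = Real.exp (-z ^ 2 / 2) * Real.exp (-(k (zdot / f₁ z)) ^ 2 / 2) := by
      rw [← Real.exp_add]; ring_nf
    rw [hexp]
    have hf₂ne : f₂ (k (zdot / f₁ z)) ≠ 0 := (hf₂_pos _).ne'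
    have hane : a ≠ 0 := ha_pos.ne'
    rw [← ha]
    field_simp
  calc ∫ zdot : ℝ, p z zdot
      = ∫ zdot : ℝ, ((2 * π * q₀)⁻¹ * Real.exp (-z ^ 2 / 2) * (a ^ 2)⁻¹) * φ (zdot / a) := by
        congr 1; funext zdot; exact hpt zdot
    _ = ((2 * π * q₀)⁻¹ * Real.exp (-z ^ 2 / 2) * (a ^ 2)⁻¹) * ∫ zdot : ℝ, φ (zdot / a) :=
        integral_const_mul _ _
    _ = ((2 * π * q₀)⁻¹ * Real.exp (-z ^ 2 / 2) * (a ^ 2)⁻¹) * (|a| • ∫ t : ℝ, φ t) := by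
        rw [MeasureTheory.Measure.integral_comp_div φ a]
    _ = (2 * π * q₀)⁻¹ * Real.exp (-z ^ 2 / 2) * a⁻¹ := by
        rw [hφ_int, abs_of_pos ha_pos, smul_eq_mul, mul_one]
        have key : (a ^ 2)⁻¹ * a = a⁻¹ := by
          rw [pow_two, mul_inv, mul_assoc, inv_mul_cancel₀ ha_pos.ne', mul_one]
        calc (2 * π * q₀)⁻¹ * Real.exp (-z ^ 2 / 2) * (a ^ 2)⁻¹ * a
            = (2 * π * q₀)⁻¹ * Real.exp (-z ^ 2 / 2) * ((a ^ 2)⁻¹ * a) := by ring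
          _ = (2 * π * q₀)⁻¹ * Real.exp (-z ^ 2 / 2) * a⁻¹ := by rw [key]
    _ = (2 * π * q₀)⁻¹ * Real.exp (-z ^ 2 / 2) / a := (div_eq_mul_inv _ _).symm
end

section
/- Let f₁, f₂ : ℝ → (0,∞) be continuously differentiable, assume F(v) := v·f₂(v) is a strictly increasing bijection of ℝ with F'(v) > 0 for all v, let k = F⁻¹, assume the normalization ∫_ℝ exp(−u²/2)/f₂(u) du = 1, set q₀ := (2π)⁻¹ ∫_ℝ exp(−u²/2)/f₁(u) du (assumed finite), and define p(z,ż) = (2πq₀)⁻¹ · k'(ż/f₁(z)) / (f₁(z)² f₂(k(ż/f₁(z)))) · exp(−(z² + k(ż/f₁(z))²)/2). Then for every z ∈ ℝ, ∫_ℝ |ż| p(z,ż) dż = 2·f₁(z)·∫_ℝ p(z,ż) dż; that is, the conditional expectation of |Ż_t| given Z_t = z equals 2 f₁(z). -/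
open MeasureTheory Real

lemma gauss_abs_moment : ∫ v : ℝ, |v| * Real.exp (-v ^ 2 / 2) = 2 := by
  have h := integral_comp_abs (f := fun x : ℝ => x * Real.exp (-x ^ 2 / 2))
  simp only [sq_abs] at h
  rw [h]
  have hIoi : ∫ x in Set.Ioi (0:ℝ), x * Real.exp (-x ^ 2 / 2) = 1 := by
    have hder : ∀ x ∈ Set.Ioi (0:ℝ),
        HasDerivAt (fun x : ℝ => -Real.exp (-x ^ 2 / 2)) (x * Real.exp (-x ^ 2 / 2)) x := by
      intro x _
      have h1 : HasDerivAt (fun x : ℝ => -x ^ 2 / 2) (-x) x := by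
        have := ((hasDerivAt_pow 2 x).neg).div_const 2
        simpa using this.congr_deriv (by push_cast; ring)
      have := (h1.exp).neg
      exact this.congr_deriv (by ring)
    have htend : Filter.Tendsto (fun x : ℝ => -Real.exp (-x ^ 2 / 2)) Filter.atTop (nhds 0) := by
      rw [← neg_zero]
      refine (Real.tendsto_exp_atBot.comp ?_).neg
      apply Filter.Tendsto.atBot_div_const (by norm_num)
      simpa using (Filter.tendsto_pow_atTop (n := 2) (by norm_num)).neg
    have := integral_Ioi_of_hasDerivAt_of_nonneg (g := fun x : ℝ => -Real.exp (-x ^ 2 / 2))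
      (g' := fun x : ℝ => x * Real.exp (-x ^ 2 / 2)) (a := 0)
      (Continuous.continuousWithinAt (by continuity)) hder
      (fun x hx => mul_nonneg (le_of_lt hx) (Real.exp_pos _).le) htend
    simpa using this
  rw [hIoi]; norm_num

/-- In the model with no interaction, the conditional expectation of
`|Ż_t|` given `Z_t = z` equals `2 f₁(z)`:
`∫ |ż| p(z,ż) dż = 2 f₁(z) ∫ p(z,ż) dż` for every `z`. -/
theorem stmt16 (f₁ f₂ : ℝ → ℝ)
    (hf₁_pos : ∀ v, 0 < f₁ v) (hf₂_pos : ∀ v, 0 < f₂ v)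
    (hf₁ : ContDiff ℝ 1 f₁) (hf₂ : ContDiff ℝ 1 f₂)
    (F : ℝ → ℝ) (hF : ∀ v, F v = v * f₂ v)
    (hF_mono : StrictMono F) (hF_bij : Function.Bijective F)
    (hF' : ∀ v, 0 < deriv F v)
    (k : ℝ → ℝ) (hk₁ : Function.LeftInverse k F) (hk₂ : Function.RightInverse k F)
    (hf₂_norm : ∫ u : ℝ, Real.exp (-u ^ 2 / 2) / f₂ u = 1)
    (h_int : Integrable (fun u : ℝ => Real.exp (-u ^ 2 / 2) / f₁ u))
    (q₀ : ℝ) (hq₀ : q₀ = (2 * π)⁻¹ * ∫ u : ℝ, Real.exp (-u ^ 2 / 2) / f₁ u)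
    (p : ℝ → ℝ → ℝ)
    (hp : ∀ z zdot : ℝ, p z zdot =
      (2 * π * q₀)⁻¹ * deriv k (zdot / f₁ z) / ((f₁ z) ^ 2 * f₂ (k (zdot / f₁ z))) *
        Real.exp (-(z ^ 2 + (k (zdot / f₁ z)) ^ 2) / 2)) :
    ∀ z : ℝ, ∫ zdot : ℝ, |zdot| * p z zdot
      = 2 * f₁ z * ∫ zdot : ℝ, p z zdot := by
  intro z
  set a := f₁ z with ha
  have ha_pos : 0 < a := hf₁_pos z
  have ha0 : a ≠ 0 := ha_pos.ne'
  set C := (2 * π * q₀)⁻¹ with hC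
  -- differentiability of F
  have hf₂d : Differentiable ℝ f₂ := hf₂.differentiable one_ne_zero
  have hFd : Differentiable ℝ F := by
    have : F = fun v => v * f₂ v := funext hF
    rw [this]; exact differentiable_id.mul hf₂d
  -- continuity of k
  have hk_cont : Continuous k := by
    let e := StrictMono.orderIsoOfSurjective F hF_mono hF_bij.2
    have hke : k = ⇑e.symm := by
      funext y
      have h1 : F (e.symm y) = y := by
        have := e.apply_symm_apply y
        rwa [show ⇑e = F from StrictMono.coe_orderIsoOfSurjective F hF_mono hF_bij.2] at this
      calc k y = k (F (e.symm y)) := by rw [h1]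
        _ = e.symm y := hk₁ _
    rw [hke]; exact e.symm.continuous
  -- derivative of k at F v
  have hk_deriv : ∀ v, HasDerivAt k (deriv F v)⁻¹ (F v) := by
    intro v
    have h1 : HasDerivAt F (deriv F v) (k (F v)) := by
      rw [hk₁ v]; exact (hFd v).hasDerivAt
    exact HasDerivAt.of_local_left_inverse hk_cont.continuousAt h1 (hF' v).ne'
      (Filter.Eventually.of_forall hk₂)
  -- change of variables u = F v
  have key : ∀ g : ℝ → ℝ, (∫ u : ℝ, g u) = ∫ v : ℝ, |deriv F v| * g (F v) := by
    intro g
    have := integral_image_eq_integral_abs_deriv_smul (s := Set.univ) MeasurableSet.univ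
      (fun x _ => ((hFd x).hasDerivAt).hasDerivWithinAt) (hF_bij.injective.injOn) g
    simpa [Set.image_univ, hF_bij.surjective.range_eq, smul_eq_mul] using this
  -- the core function
  set g₀ : ℝ → ℝ := fun u => deriv k u / f₂ (k u) * Real.exp (-(z ^ 2 + (k u) ^ 2) / 2)
    with hg₀
  have hp' : ∀ u : ℝ, p z (a * u) = C / a ^ 2 * g₀ u := by
    intro u
    have hau : a * u / f₁ z = u := by rw [← ha]; field_simp
    rw [hp]
    simp only [hau, hg₀, ← ha]
    field_simp
  -- values after substitution
  have hsub : ∀ v : ℝ, |deriv F v| * g₀ (F v)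
      = Real.exp (-z ^ 2 / 2) * (Real.exp (-v ^ 2 / 2) / f₂ v) := by
    intro v
    have hdk : deriv k (F v) = (deriv F v)⁻¹ := (hk_deriv v).deriv
    rw [hg₀]
    simp only [hk₁ v, hdk, abs_of_pos (hF' v)]
    rw [show -(z ^ 2 + v ^ 2) / 2 = -z ^ 2 / 2 + -v ^ 2 / 2 by ring, Real.exp_add]
    linear_combination (Real.exp (-z ^ 2 / 2) * Real.exp (-v ^ 2 / 2) / f₂ v) *
      mul_inv_cancel₀ (hF' v).ne'
  -- scaling: ż = a u
  have hscale : ∀ q : ℝ → ℝ, (∫ x : ℝ, q x) = a * ∫ u : ℝ, q (a * u) := by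
    intro q
    have := MeasureTheory.Measure.integral_comp_mul_left q a
    rw [this, smul_eq_mul, abs_inv, abs_of_pos ha_pos]
    field_simp
  -- compute LHS
  have hL : (∫ zdot : ℝ, |zdot| * p z zdot) = 2 * C * Real.exp (-z ^ 2 / 2) := by
    rw [hscale (fun x => |x| * p z x)]
    simp only [hp']
    have : ∀ u : ℝ, |a * u| * (C / a ^ 2 * g₀ u) = (C / a) * (|u| * g₀ u) := by
      intro u
      rw [abs_mul, abs_of_pos ha_pos]
      field_simp
    simp only [this]
    rw [MeasureTheory.integral_const_mul _, key (fun u => |u| * g₀ u)]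
    have h2 : ∀ v : ℝ, |deriv F v| * (|F v| * g₀ (F v))
        = Real.exp (-z ^ 2 / 2) * (|v| * Real.exp (-v ^ 2 / 2)) := by
      intro v
      have : |deriv F v| * (|F v| * g₀ (F v)) = |F v| * (|deriv F v| * g₀ (F v)) := by ring
      rw [this, hsub v, hF v, abs_mul, abs_of_pos (hf₂_pos v)]
      field_simp [(hf₂_pos v).ne']
    simp only [h2]
    rw [MeasureTheory.integral_const_mul _, gauss_abs_moment]
    field_simp
  -- compute RHS
  have hR : (∫ zdot : ℝ, p z zdot) = C / a * Real.exp (-z ^ 2 / 2) := by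
    rw [hscale (p z)]
    simp only [hp']
    rw [MeasureTheory.integral_const_mul _, key g₀]
    simp only [hsub]
    rw [MeasureTheory.integral_const_mul _, hf₂_norm]
    field_simp
  rw [hL, hR]
  field_simp
end

section
/- Let f₁, f₂ : ℝ → (0,∞) be continuously differentiable, assume F(v) := v·f₂(v) is a strictly increasing bijection of ℝ with F'(v) > 0 for all v, let k = F⁻¹, assume the normalization ∫_ℝ exp(−u²/2)/f₂(u) du = 1, set q₀ := (2π)⁻¹ ∫_ℝ exp(−u²/2)/f₁(u) du (assumed finite), and define p(z,ż) = (2πq₀)⁻¹ · k'(ż/f₁(z)) / (f₁(z)² f₂(k(ż/f₁(z)))) · exp(−(z² + k(ż/f₁(z))²)/2). Define p_V(v) = (k'(v)·k(v)/v)·exp(−k(v)²/2) for v ≠ 0 and p_Z(z) = (2πq₀)⁻¹ exp(−z²/2)/f₁(z). Then (i) ∫_ℝ p_V(v) dv = 1, and (ii) for all z ∈ ℝ and ż ≠ 0, p(z,ż) = p_Z(z)·(1/f₁(z))·p_V(ż/f₁(z)); that is, V_t = Ż_t/f₁(Z_t) has density p_V and is independent of Z_t, so the conditional law of Ż_t given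 Z_t = z depends on z only through the scale factor f₁(z). -/
open MeasureTheory Real

/-- In the model with no interaction, with
`p_V(v) = (k'(v)k(v)/v)e^{−k(v)²/2}` (for `v ≠ 0`) and
`p_Z(z) = (2πq₀)⁻¹ e^{−z²/2}/f₁(z)`:
(i) `∫ p_V = 1`, and (ii) `p(z,ż) = p_Z(z)·(1/f₁(z))·p_V(ż/f₁(z))` for `ż ≠ 0`,
so `V_t = Ż_t/f₁(Z_t)` has density `p_V` and is independent of `Z_t`. -/
theorem stmt17 (f₁ f₂ : ℝ → ℝ)
    (hf₁_pos : ∀ v, 0 < f₁ v) (hf₂_pos : ∀ v, 0 < f₂ v)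
    (hf₁ : ContDiff ℝ 1 f₁) (hf₂ : ContDiff ℝ 1 f₂)
    (F : ℝ → ℝ) (hF : ∀ v, F v = v * f₂ v)
    (hF_mono : StrictMono F) (hF_bij : Function.Bijective F)
    (hF' : ∀ v, 0 < deriv F v)
    (k : ℝ → ℝ) (hk₁ : Function.LeftInverse k F) (hk₂ : Function.RightInverse k F)
    (hf₂_norm : ∫ u : ℝ, Real.exp (-u ^ 2 / 2) / f₂ u = 1)
    (h_int : Integrable (fun u : ℝ => Real.exp (-u ^ 2 / 2) / f₁ u))
    (q₀ : ℝ) (hq₀ : q₀ = (2 * π)⁻¹ * ∫ u : ℝ, Real.exp (-u ^ 2 / 2) / f₁ u)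
    (p : ℝ → ℝ → ℝ)
    (hp : ∀ z zdot : ℝ, p z zdot =
      (2 * π * q₀)⁻¹ * deriv k (zdot / f₁ z) / ((f₁ z) ^ 2 * f₂ (k (zdot / f₁ z))) *
        Real.exp (-(z ^ 2 + (k (zdot / f₁ z)) ^ 2) / 2))
    (pV : ℝ → ℝ)
    (hpV : ∀ v : ℝ, v ≠ 0 →
      pV v = deriv k v * k v / v * Real.exp (-(k v) ^ 2 / 2))
    (pZ : ℝ → ℝ)
    (hpZ : ∀ z : ℝ, pZ z = (2 * π * q₀)⁻¹ * Real.exp (-z ^ 2 / 2) / f₁ z) :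
    (∫ v : ℝ, pV v) = 1 ∧
    ∀ z zdot : ℝ, zdot ≠ 0 →
      p z zdot = pZ z * (1 / f₁ z) * pV (zdot / f₁ z) := by

  -- basic facts
  have hF_eq : F = fun v => v * f₂ v := funext hF
  have hFdiff : Differentiable ℝ F := by
    rw [hF_eq]
    exact differentiable_id.mul (hf₂.differentiable one_ne_zero)
  have hF0 : F 0 = 0 := by rw [hF]; ring
  -- continuity of k
  have hsurj : Function.Surjective F := hF_bij.2
  set e := StrictMono.orderIsoOfSurjective F hF_mono hsurj with he
  have hke : k = ⇑e.symm := by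
    funext x
    apply e.injective
    have h1 : e (k x) = F (k x) := rfl
    rw [h1, hk₂ x, OrderIso.apply_symm_apply]
  have hk_cont : Continuous k := by rw [hke]; exact OrderIso.continuous e.symm
  -- derivative of k
  have hderivk : ∀ u : ℝ, deriv k (F u) = (deriv F u)⁻¹ := by
    intro u
    have hFd : HasDerivAt F (deriv F u) (k (F u)) := by
      rw [hk₁ u]; exact (hFdiff u).hasDerivAt
    have hkd : HasDerivAt k (deriv F u)⁻¹ (F u) :=
      HasDerivAt.of_local_left_inverse hk_cont.continuousAt hFd (hF' u).ne'
        (Filter.Eventually.of_forall hk₂)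
    exact hkd.deriv
  set g : ℝ → ℝ := fun v => deriv k v * k v / v * Real.exp (-(k v) ^ 2 / 2) with hg
  have h0 : ∀ᵐ v : ℝ, v ≠ 0 := by
    rw [ae_iff]
    simpa using Real.volume_singleton
  have key : ∀ x : ℝ, x ≠ 0 → |deriv F x| • g (F x) = Real.exp (-x ^ 2 / 2) / f₂ x := by
    intro x hx
    have hFx : F x = x * f₂ x := hF x
    have hFxne : F x ≠ 0 := by
      rw [hFx]
      exact mul_ne_zero hx (hf₂_pos x).ne'
    have habs : |deriv F x| = deriv F x := abs_of_pos (hF' x)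
    rw [smul_eq_mul, habs, hg]
    simp only
    rw [hderivk x, hk₁ x, hFx]
    have h1 : deriv F x ≠ 0 := (hF' x).ne'
    field_simp
  constructor
  · have step1 : (∫ v : ℝ, pV v) = ∫ v : ℝ, g v :=
      integral_congr_ae (h0.mono fun v hv => hpV v hv)
    have step2 : (∫ v : ℝ, g v) = ∫ v in F '' Set.univ, g v := by
      rw [Set.image_univ, hsurj.range_eq, setIntegral_univ]
    have step3 : (∫ v in F '' Set.univ, g v) = ∫ x in Set.univ, |deriv F x| • g (F x) :=
      integral_image_eq_integral_abs_deriv_smul MeasurableSet.univ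
        (fun x _ => (hFdiff x).hasDerivAt.hasDerivWithinAt) hF_bij.1.injOn g
    have step4 : (∫ x in Set.univ, |deriv F x| • g (F x))
        = ∫ x : ℝ, Real.exp (-x ^ 2 / 2) / f₂ x := by
      rw [setIntegral_univ]
      exact integral_congr_ae (h0.mono key)
    rw [step1, step2, step3, step4, hf₂_norm]
  · intro z zdot hzdot
    have hf₁z : f₁ z ≠ 0 := (hf₁_pos z).ne'
    set v := zdot / f₁ z with hvdef
    have hv : v ≠ 0 := div_ne_zero hzdot hf₁z
    have hkv : k v * f₂ (k v) = v := by
      have h1 := hk₂ v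
      rw [hF] at h1
      exact h1
    have hf₂kv : f₂ (k v) ≠ 0 := (hf₂_pos (k v)).ne'
    rw [hp, hpZ, hpV _ hv]
    rw [← hvdef]
    have hexp : Real.exp (-(z ^ 2 + (k v) ^ 2) / 2)
        = Real.exp (-z ^ 2 / 2) * Real.exp (-(k v) ^ 2 / 2) := by
      rw [← Real.exp_add]; ring_nf
    rw [hexp]
    have h1 : k v / v = (f₂ (k v))⁻¹ := by
      field_simp
      linarith [hkv]
    rw [show deriv k v * k v / v = deriv k v * (f₂ (k v))⁻¹ from by rw [mul_div_assoc, h1]]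
    field_simp
end

section
/- Let k : ℝ → ℝ be differentiable, strictly increasing, with k(0) = 0, and define p_V(v) = (k'(v)·k(v)/v)·exp(−k(v)²/2) for v ≠ 0. Then for every v ∈ ℝ, ∫₀ᵛ u·p_V(u) du = 1 − exp(−k(v)²/2), and consequently k(v) = sign(v)·√(−2·ln(1 − ∫₀ᵛ u·p_V(u) du)). -/
open MeasureTheory Real intervalIntegral

lemma mono_deriv_nonneg' {k : ℝ → ℝ} (hk : Differentiable ℝ k) (hm : Monotone k) (x : ℝ) :
    0 ≤ deriv k x := by
  have h := (hk x).hasDerivAt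
  rw [hasDerivAt_iff_tendsto_slope] at h
  have h2 : Filter.Tendsto (slope k x) (nhdsWithin x (Set.Ioi x)) (nhds (deriv k x)) :=
    h.mono_left (nhdsWithin_mono x (fun y hy => ne_of_gt hy))
  refine ge_of_tendsto h2 ?_
  filter_upwards [self_mem_nhdsWithin] with y hy
  rw [slope_def_field]
  exact div_nonneg (sub_nonneg.2 (hm (le_of_lt hy))) (sub_nonneg.2 (le_of_lt hy))

/-- If `k` is differentiable, strictly increasing, `k(0) = 0`, and
`p_V(v) = (k'(v)k(v)/v)e^{−k(v)²/2}` for `v ≠ 0`, then for every `v`,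
`∫₀ᵛ u p_V(u) du = 1 − e^{−k(v)²/2}`, and consequently
`k(v) = sign(v)·√(−2 ln(1 − ∫₀ᵛ u p_V(u) du))`. -/
theorem stmt18 (k : ℝ → ℝ) (hk : Differentiable ℝ k)
    (hk_mono : StrictMono k) (hk0 : k 0 = 0)
    (pV : ℝ → ℝ)
    (hpV : ∀ v : ℝ, v ≠ 0 →
      pV v = deriv k v * k v / v * Real.exp (-(k v) ^ 2 / 2)) :
    ∀ v : ℝ,
      (∫ u in (0:ℝ)..v, u * pV u) = 1 - Real.exp (-(k v) ^ 2 / 2) ∧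
      k v = Real.sign v *
        Real.sqrt (-2 * Real.log (1 - ∫ u in (0:ℝ)..v, u * pV u)) := by
  intro v
  set F : ℝ → ℝ := fun u => -Real.exp (-(k u) ^ 2 / 2) with hF_def
  set g : ℝ → ℝ := fun u => deriv k u * k u * Real.exp (-(k u) ^ 2 / 2) with hg_def
  have hd : ∀ x, 0 ≤ deriv k x := mono_deriv_nonneg' hk hk_mono.monotone
  have hF : ∀ x : ℝ, HasDerivAt F (g x) x := by
    intro x
    have h1 : HasDerivAt k (deriv k x) x := (hk x).hasDerivAt
    have h2 : HasDerivAt (fun u => -(k u) ^ 2 / 2)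
        (-(2 * k x ^ 1 * deriv k x) / 2) x := ((h1.pow 2).neg).div_const 2
    have h3 := (h2.exp).neg
    refine h3.congr_deriv ?_
    simp [hg_def]; ring
  have hcont : Continuous F := by
    have : Continuous k := hk.continuous
    continuity
  have hint : IntervalIntegrable g volume 0 v := by
    rcases le_total 0 v with hv | hv
    · refine intervalIntegrable_deriv_of_nonneg hcont.continuousOn
        (fun x _ => hF x) (fun x hx => ?_)
      rw [min_eq_left hv, max_eq_right hv] at hx
      have hkx : 0 ≤ k x := by
        rw [← hk0]; exact (hk_mono.monotone hx.1.le)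
      exact mul_nonneg (mul_nonneg (hd x) hkx) (Real.exp_nonneg _)
    · have : IntervalIntegrable (fun u => -g u) volume 0 v := by
        refine intervalIntegrable_deriv_of_nonneg (g := fun u => -F u)
          (hcont.neg).continuousOn (fun x _ => (hF x).neg) (fun x hx => ?_)
        rw [min_eq_right hv, max_eq_left hv] at hx
        have hkx : k x ≤ 0 := by
          rw [← hk0]; exact (hk_mono.monotone hx.2.le)
        have : g x ≤ 0 :=
          mul_nonpos_of_nonpos_of_nonneg
            (mul_nonpos_of_nonneg_of_nonpos (hd x) hkx) (Real.exp_nonneg _)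
        linarith
      have h2 := this.neg
      convert h2 using 1
      ext u; simp
  have hFTC : (∫ u in (0:ℝ)..v, g u) = F v - F 0 :=
    intervalIntegral.integral_eq_sub_of_hasDerivAt (fun x _ => hF x) hint
  have hcongr : (∫ u in (0:ℝ)..v, u * pV u) = ∫ u in (0:ℝ)..v, g u := by
    refine intervalIntegral.integral_congr_ae ?_
    have h0 : ∀ᵐ x : ℝ, x ≠ 0 := by
      rw [Filter.eventually_iff, mem_ae_iff]
      have : {x : ℝ | x ≠ 0}ᶜ = {0} := by ext x; simp
      rw [this]
      exact Real.volume_singleton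
    filter_upwards [h0] with x hx _
    rw [hpV x hx, hg_def]
    field_simp
  have hmain : (∫ u in (0:ℝ)..v, u * pV u) = 1 - Real.exp (-(k v) ^ 2 / 2) := by
    rw [hcongr, hFTC, hF_def]
    simp [hk0]
    ring
  refine ⟨hmain, ?_⟩
  rw [hmain]
  have h1 : (1 : ℝ) - (1 - Real.exp (-(k v) ^ 2 / 2)) = Real.exp (-(k v) ^ 2 / 2) := by ring
  rw [h1, Real.log_exp]
  have h2 : -2 * (-(k v) ^ 2 / 2) = (k v) ^ 2 := by ring
  rw [h2, Real.sqrt_sq_eq_abs]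
  rcases lt_trichotomy v 0 with hv | hv | hv
  · have hkv : k v < 0 := by rw [← hk0]; exact hk_mono hv
    rw [Real.sign_of_neg hv, abs_of_neg hkv]; ring
  · simp [hv, hk0]
  · have hkv : 0 < k v := by rw [← hk0]; exact hk_mono hv
    rw [Real.sign_of_pos hv, abs_of_pos hkv]; ring
end
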